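/- arXiv:1007.4463 — 7 statements merged into one kernel-verified Lean document; each statement's English description precedes it below -/
import Mathlib

section
/- Let n > 2 and let a_1, ..., a_n be nonzero integers such that Z·a_1 + Z·a_2 + ... + Z·a_n = Z (i.e., gcd(a_1,...,a_n) = 1). Then there exists an integer x such that Z·(a_1 + x·a_n) + Z·a_2 + ... + Z·a_{n-1} = Z, i.e., gcd(a_1 + x·a_n, a_2, ..., a_{n-1}) = 1. -/
/-- Key arithmetic lemma: if no prime divides `a`, `g` and `c` simultaneously... more precisely
if every prime dividing `a` and `g` fails to divide `c`, and `g ≠ 0`, then there is `x`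
with `gcd (a + x*c) g = 1`. -/
lemma stable_range_key (a c g : ℤ) (hg : g ≠ 0)
    (h : ∀ p : ℕ, p.Prime → (p : ℤ) ∣ a → (p : ℤ) ∣ g → ¬ (p : ℤ) ∣ c) :
    ∃ x : ℤ, Int.gcd (a + x * c) g = 1 := by
  set v : ℕ := ∏ p ∈ g.natAbs.primeFactors.filter (fun p : ℕ => ¬ ((p : ℤ) ∣ a)), p with hv
  refine ⟨(v : ℤ), ?_⟩
  by_contra hne
  obtain ⟨p, hp, hpd⟩ := Nat.exists_prime_and_dvd hne
  have hpz : Prime (p : ℤ) := Nat.prime_iff_prime_int.mp hp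
  have h1 : (p : ℤ) ∣ a + (v : ℤ) * c :=
    dvd_trans (Int.natCast_dvd_natCast.mpr hpd) (Int.gcd_dvd_left _ _)
  have h2 : (p : ℤ) ∣ g :=
    dvd_trans (Int.natCast_dvd_natCast.mpr hpd) (Int.gcd_dvd_right _ _)
  by_cases hpa : (p : ℤ) ∣ a
  · -- p divides a, hence p ∤ c and p ∤ v, contradiction with p ∣ a + v*c
    have hpc : ¬ (p : ℤ) ∣ c := h p hp hpa h2
    have hpv : ¬ (p : ℤ) ∣ (v : ℤ) := by
      rw [Int.natCast_dvd_natCast]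
      intro hdv
      obtain ⟨q, hq, hpq⟩ := hp.prime.exists_mem_finset_dvd hdv
      rw [Finset.mem_filter, Nat.mem_primeFactors] at hq
      have : p = q := (Nat.prime_dvd_prime_iff_eq hp hq.1.1).mp hpq
      exact hq.2 (this ▸ hpa)
    have : (p : ℤ) ∣ (v : ℤ) * c := (dvd_add_right hpa).mp h1
    rcases hpz.dvd_mul.mp this with h' | h'
    · exact hpv h'
    · exact hpc h'
  · -- p does not divide a, hence p ∣ v, so p ∣ a, contradiction
    have hmem : p ∈ g.natAbs.primeFactors.filter (fun p : ℕ => ¬ ((p : ℤ) ∣ a)) := by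
      rw [Finset.mem_filter, Nat.mem_primeFactors]
      refine ⟨⟨hp, ?_, by simpa using hg⟩, hpa⟩
      rw [← Int.natAbs_dvd_natAbs] at h2
      simpa using h2
    have hpv : (p : ℤ) ∣ (v : ℤ) :=
      Int.natCast_dvd_natCast.mpr (Finset.dvd_prod_of_mem _ hmem)
    have : (p : ℤ) ∣ a := (dvd_add_left (hpv.mul_right c)).mp h1
    exact hpa this

/-- Stable range 2 for ℤ: if `a 1, ..., a n` (n > 2) are nonzero integers with
`gcd(a 1, ..., a n) = 1`, then there is `x : ℤ` such that
`gcd(a 1 + x * a n, a 2, ..., a (n-1)) = 1`. -/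
theorem stable_range_two_int (n : ℕ) (hn : 2 < n) (a : ℕ → ℤ)
    (ha : ∀ i ∈ Finset.Icc 1 n, a i ≠ 0)
    (hgcd : Finset.gcd (Finset.Icc 1 n) a = 1) :
    ∃ x : ℤ,
      Finset.gcd (Finset.Icc 1 (n - 1))
        (fun i => if i = 1 then a 1 + x * a n else a i) = 1 := by
  set s := Finset.Icc 2 (n - 1) with hs
  set g := s.gcd a with hg'
  have hgne : g ≠ 0 := by
    rw [hg', Ne, Finset.gcd_eq_zero_iff]
    intro hall
    exact ha 2 (by rw [Finset.mem_Icc]; omega)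
      (hall 2 (by rw [hs, Finset.mem_Icc]; omega))
  have hdvd : ∀ d : ℤ, d ∣ a 1 → d ∣ a n → d ∣ g → IsUnit d := by
    intro d h1 hn' hgd
    have : d ∣ Finset.gcd (Finset.Icc 1 n) a := by
      apply Finset.dvd_gcd
      intro i hi
      rw [Finset.mem_Icc] at hi
      rcases eq_or_ne i 1 with rfl | hi1
      · exact h1
      rcases eq_or_ne i n with rfl | hin
      · exact hn'
      · exact hgd.trans (Finset.gcd_dvd (by rw [hs, Finset.mem_Icc]; omega))
    rw [hgcd] at this
    exact isUnit_of_dvd_one this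
  obtain ⟨x, hx⟩ := stable_range_key (a 1) (a n) g hgne (by
    intro p hp hpa hpg hpc
    exact (Nat.prime_iff_prime_int.mp hp).not_unit (hdvd _ hpa hpc hpg))
  refine ⟨x, ?_⟩
  have hicc : Finset.Icc 1 (n - 1) = insert 1 s := by
    ext i
    rw [Finset.mem_insert, hs, Finset.mem_Icc, Finset.mem_Icc]
    omega
  rw [hicc, Finset.gcd_insert]
  have hcong : s.gcd (fun i => if i = 1 then a 1 + x * a n else a i) = g := by
    rw [hg']
    refine Finset.gcd_congr rfl (fun i hi => ?_)
    rw [hs, Finset.mem_Icc] at hi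
    simp only [if_neg (by omega : i ≠ 1)]
  rw [hcong]
  simp only [if_true]
  rw [← Int.coe_gcd, hx]
  rfl
end

section
/- Let n > 2 and let m, a_1, ..., a_n be nonzero integers satisfying gcd(m·a_1, m·a_2, ..., m·a_{n-1}, m·a_n + 1) = 1. Then there exist integers x_1, ..., x_{n-3} such that gcd(m·a_1 + x_1·m²·a_3 + ... + x_{n-3}·m²·a_{n-1}, m·a_2, m·a_n + 1) = 1. -/
/-- Bezout for `Finset.gcd` over ℤ. -/
lemma finset_gcd_bezout (s : Finset ℕ) (f : ℕ → ℤ) :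
    ∃ u : ℕ → ℤ, (s.gcd f) = ∑ i ∈ s, u i * f i := by
  classical
  induction s using Finset.induction_on with
  | empty => exact ⟨0, by simp⟩
  | insert b s ha ih =>
    obtain ⟨u, hu⟩ := ih
    refine ⟨fun i => if i = b then Int.gcdA (f b) (s.gcd f)
      else Int.gcdB (f b) (s.gcd f) * u i, ?_⟩
    rw [Finset.gcd_insert, Finset.sum_insert ha]
    have h1 : GCDMonoid.gcd (f b) (s.gcd f) = (Int.gcd (f b) (s.gcd f) : ℤ) :=
      (Int.coe_gcd _ _).symm
    rw [h1, Int.gcd_eq_gcd_ab]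
    beta_reduce
    rw [if_pos rfl]
    have h2 : ∑ i ∈ s, (if i = b then Int.gcdA (f b) (s.gcd f)
        else Int.gcdB (f b) (s.gcd f) * u i) * f i
        = Int.gcdB (f b) (s.gcd f) * ∑ i ∈ s, u i * f i := by
      rw [Finset.mul_sum]
      refine Finset.sum_congr rfl fun i hi => ?_
      rw [if_neg (by rintro rfl; exact ha hi)]
      ring
    rw [h2, ← hu]
    ring

/-- Key lemma: if no prime divides all of `A`, `C`, `B`, then some `A + t*C` is
coprime to `B`. -/
lemma key_lemma (A C B : ℤ) (hB : B ≠ 0)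
    (h : ∀ p : ℕ, p.Prime → (p : ℤ) ∣ A → (p : ℤ) ∣ C → (p : ℤ) ∣ B → False) :
    ∃ t : ℤ, Int.gcd (A + t * C) B = 1 := by
  classical
  set S : Finset ℕ := B.natAbs.primeFactors.filter (fun p : ℕ => ¬ (p : ℤ) ∣ A) with hS
  set t : ℤ := ∏ p ∈ S, (p : ℤ) with ht
  refine ⟨t, ?_⟩
  by_contra hg
  obtain ⟨p, hp, hpd⟩ := Nat.exists_prime_and_dvd hg
  have hpz : (p : ℤ) ∣ (Int.gcd (A + t * C) B : ℤ) := Int.natCast_dvd_natCast.mpr hpd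
  have h1 : (p : ℤ) ∣ A + t * C := hpz.trans (Int.gcd_dvd_left _ _)
  have h2 : (p : ℤ) ∣ B := hpz.trans (Int.gcd_dvd_right _ _)
  by_cases hA : (p : ℤ) ∣ A
  · have hpt : ¬ (p : ℤ) ∣ t := by
      intro hd
      obtain ⟨q, hqS, hq⟩ := (Nat.prime_iff_prime_int.mp hp).exists_mem_finset_dvd hd
      have hq' := Nat.prime_of_mem_primeFactors (Finset.mem_filter.mp hqS).1
      have : p = q := (Nat.prime_dvd_prime_iff_eq hp hq').mp (Int.natCast_dvd_natCast.mp hq)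
      subst this
      exact (Finset.mem_filter.mp hqS).2 hA
    have htC : (p : ℤ) ∣ t * C := (dvd_add_right hA).mp h1
    have hC : (p : ℤ) ∣ C := ((Nat.prime_iff_prime_int.mp hp).dvd_mul.mp htC).resolve_left hpt
    exact h p hp hA hC h2
  · have hpS : p ∈ S := by
      rw [hS, Finset.mem_filter]
      refine ⟨Nat.mem_primeFactors.mpr ⟨hp, ?_, Int.natAbs_ne_zero.mpr hB⟩, hA⟩
      exact Int.natCast_dvd.mp h2
    have hpt : (p : ℤ) ∣ t := Finset.dvd_prod_of_mem _ hpS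
    have : (p : ℤ) ∣ A := by
      have := dvd_sub h1 (hpt.mul_right C)
      simpa using this
    exact hA this

/-- Refined stable range property of ℤ: if `m, a 1, ..., a n` (n > 2) are nonzero integers
with `gcd(m*a 1, ..., m*a (n-1), m*a n + 1) = 1`, then there are integers
`x 1, ..., x (n-3)` with
`gcd(m*a 1 + x 1*m²*a 3 + ⋯ + x (n-3)*m²*a (n-1), m*a 2, m*a n + 1) = 1`. -/
theorem refined_stable_range (n : ℕ) (hn : 2 < n) (m : ℤ) (hm : m ≠ 0)
    (a : ℕ → ℤ) (ha : ∀ i ∈ Finset.Icc 1 n, a i ≠ 0)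
    (hgcd : Finset.gcd (Finset.Icc 1 n)
      (fun i => if i = n then m * a n + 1 else m * a i) = 1) :
    ∃ x : ℕ → ℤ,
      Int.gcd (m * a 1 + ∑ i ∈ Finset.Icc 1 (n - 3), x i * m ^ 2 * a (i + 2))
        (Int.gcd (m * a 2) (m * a n + 1) : ℤ) = 1 := by
  classical
  set c : ℤ := Finset.gcd (Finset.Icc 1 (n - 3)) (fun i => a (i + 2)) with hc
  obtain ⟨u, hu⟩ := finset_gcd_bezout (Finset.Icc 1 (n - 3)) (fun i => a (i + 2))
  set B : ℤ := (Int.gcd (m * a 2) (m * a n + 1) : ℤ) with hBdef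
  have ha2 : m * a 2 ≠ 0 := mul_ne_zero hm (ha 2 (by simp [Finset.mem_Icc]; omega))
  have hB : B ≠ 0 := by
    simp only [hBdef, ne_eq, Int.natCast_eq_zero, Int.gcd_eq_zero_iff, not_and]
    intro h; exact absurd h ha2
  have hkey : ∀ p : ℕ, p.Prime → (p : ℤ) ∣ m * a 1 → (p : ℤ) ∣ m ^ 2 * c →
      (p : ℤ) ∣ B → False := by
    intro p hp hA hC hBp
    have hd2 : (p : ℤ) ∣ m * a 2 := hBp.trans (Int.gcd_dvd_left (m * a 2) (m * a n + 1))
    have hdn : (p : ℤ) ∣ m * a n + 1 := hBp.trans (Int.gcd_dvd_right (m * a 2) (m * a n + 1))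
    have hpm : ¬ (p : ℤ) ∣ m := by
      intro hpm
      have : (p : ℤ) ∣ 1 := by
        have := dvd_sub hdn ((hpm.mul_right (a n)))
        simpa using this
      have := Int.le_of_dvd one_pos this
      have := hp.two_le
      omega
    have hpc : (p : ℤ) ∣ c := by
      rcases (Nat.prime_iff_prime_int.mp hp).dvd_mul.mp hC with h' | h'
      · exact absurd ((Nat.prime_iff_prime_int.mp hp).dvd_of_dvd_pow h') hpm
      · exact h'
    have hdall : ∀ i ∈ Finset.Icc 1 n,
        (p : ℤ) ∣ (fun i => if i = n then m * a n + 1 else m * a i) i := by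
      intro i hi
      simp only [Finset.mem_Icc] at hi
      by_cases hin : i = n
      · simpa [hin] using hdn
      · simp only [if_neg hin]
        obtain ⟨hi1, hi2⟩ := hi
        rcases Nat.lt_or_ge i 3 with h3 | h3
        · interval_cases i
          · exact hA
          · exact hd2
        · have hmem : i - 2 ∈ Finset.Icc 1 (n - 3) := by
            simp [Finset.mem_Icc]; omega
          have := (Finset.gcd_dvd hmem : c ∣ a (i - 2 + 2))
          have hdi : (p : ℤ) ∣ a i := by
            have h' := hpc.trans this
            rwa [show i - 2 + 2 = i by omega] at h'
          exact hdi.mul_left m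
    have : (p : ℤ) ∣ 1 := by
      rw [← hgcd]
      exact Finset.dvd_gcd hdall
    have := Int.le_of_dvd one_pos this
    have := hp.two_le
    omega
  obtain ⟨t, htgcd⟩ := key_lemma (m * a 1) (m ^ 2 * c) B hB hkey
  refine ⟨fun i => t * u i, ?_⟩
  have hsum : ∑ i ∈ Finset.Icc 1 (n - 3), (t * u i) * m ^ 2 * a (i + 2)
      = t * (m ^ 2 * c) := by
    rw [hc, hu, Finset.mul_sum, Finset.mul_sum]
    refine Finset.sum_congr rfl fun i hi => ?_
    ring
  rw [hsum]
  exact htgcd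
end

section
/- Let n ≥ 2 and m ≥ 1. The quotient group Γ_n(m)/Γ_n(m²) is isomorphic to (Z/mZ)^{n²−1}, the direct product of n²−1 copies of the cyclic group of order m. -/
open Matrix

def Gamma (n m : ℕ) : Subgroup (Matrix.SpecialLinearGroup (Fin n) ℤ) :=
  (Matrix.SpecialLinearGroup.map (n := Fin n) (Int.castRingHom (ZMod m))).ker

instance (n m k : ℕ) : ((Gamma n k).subgroupOf (Gamma n m)).Normal :=
  Subgroup.Normal.subgroupOf (MonoidHom.normal_ker _) _

namespace GammaAux

lemma mem_Gamma_iff (n m : ℕ) (g : Matrix.SpecialLinearGroup (Fin n) ℤ) :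
    g ∈ Gamma n m ↔ ∀ i j, ((g.1 i j - (1 : Matrix (Fin n) (Fin n) ℤ) i j : ℤ) : ZMod m) = 0 := by
  rw [Gamma, MonoidHom.mem_ker, Matrix.SpecialLinearGroup.ext_iff]
  rw [Matrix.SpecialLinearGroup.map_apply_coe]
  constructor
  · intro h i j
    have := h i j
    simp [Matrix.map_apply, Matrix.one_apply] at this ⊢
    by_cases hij : i = j <;> simp [hij] at this ⊢ <;> simp [this]
  · intro h
    intro i j
    have := h i j
    simp [Matrix.map_apply, Matrix.one_apply] at this ⊢
    by_cases hij : i = j <;> simp [hij, sub_eq_zero] at this ⊢ <;> simp [this]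

lemma mem_Gamma_iff_dvd (n m : ℕ) (g : Matrix.SpecialLinearGroup (Fin n) ℤ) :
    g ∈ Gamma n m ↔ ∀ i j, (m : ℤ) ∣ (g.1 i j - (1 : Matrix (Fin n) (Fin n) ℤ) i j) := by
  rw [mem_Gamma_iff]
  simp only [ZMod.intCast_zmod_eq_zero_iff_dvd]

def Amat (m : ℕ) {n : ℕ} (M : Matrix (Fin n) (Fin n) ℤ) : Matrix (Fin n) (Fin n) ℤ :=
  fun i j => (M i j - (1 : Matrix (Fin n) (Fin n) ℤ) i j) / (m : ℤ)

lemma Amat_spec {n m : ℕ} (hm : m ≠ 0) {g : Matrix.SpecialLinearGroup (Fin n) ℤ}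
    (hg : g ∈ Gamma n m) : (g : Matrix (Fin n) (Fin n) ℤ) = 1 + (m : ℤ) • Amat m g.1 := by
  rw [mem_Gamma_iff_dvd] at hg
  ext i j
  have := (hg i j)
  simp only [Matrix.add_apply, Matrix.smul_apply, Amat, smul_eq_mul]
  rw [Int.mul_ediv_cancel' this]
  ring

lemma Amat_one_add {n : ℕ} (m : ℕ) (hm : m ≠ 0) (C : Matrix (Fin n) (Fin n) ℤ) :
    Amat m (1 + (m : ℤ) • C) = C := by
  ext i j
  simp only [Amat, Matrix.add_apply, Matrix.smul_apply, smul_eq_mul, add_sub_cancel_left]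
  exact Int.mul_ediv_cancel_left _ (by exact_mod_cast hm)

lemma Amat_mul_aux {n : ℕ} (m : ℕ) (hm : m ≠ 0) (A B : Matrix (Fin n) (Fin n) ℤ) :
    Amat m ((1 + (m:ℤ) • A) * (1 + (m:ℤ) • B)) = A + B + (m:ℤ) • (A * B) := by
  have key : (1 + (m:ℤ) • A) * (1 + (m:ℤ) • B) = 1 + (m:ℤ) • (A + B + (m:ℤ) • (A * B)) := by
    noncomm_ring
    simp only [smul_add]
    abel
  rw [key, Amat_one_add m hm]

lemma Amat_mul {n m : ℕ} (hm : m ≠ 0) {g h : Matrix.SpecialLinearGroup (Fin n) ℤ}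
    (hg : g ∈ Gamma n m) (hh : h ∈ Gamma n m) :
    Amat m ((g*h) : Matrix.SpecialLinearGroup (Fin n) ℤ).1 =
      Amat m g.1 + Amat m h.1 + (m:ℤ) • (Amat m g.1 * Amat m h.1) := by
  conv_lhs => rw [Matrix.SpecialLinearGroup.coe_mul, Amat_spec hm hg, Amat_spec hm hh]
  exact Amat_mul_aux m hm _ _

lemma trace_dvd {n m : ℕ} (hm : m ≠ 0) {g : Matrix.SpecialLinearGroup (Fin n) ℤ}
    (hg : g ∈ Gamma n m) : (m : ℤ) ∣ Matrix.trace (Amat m g.1) := by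
  have hdet : (1 : ℤ) = det (1 + (m:ℤ) • Amat m g.1) := by
    rw [← Amat_spec hm hg]; exact g.2.symm
  rw [Matrix.det_one_add_smul] at hdet
  obtain ⟨e, he⟩ : ∃ e : ℤ,
      (1:ℤ) = 1 + Matrix.trace (Amat m (g : Matrix (Fin n) (Fin n) ℤ)) * m + e * m^2 :=
    ⟨_, hdet⟩
  have h0 : (Matrix.trace (Amat m (g : Matrix (Fin n) (Fin n) ℤ)) + e * m) * (m:ℤ) = 0 := by
    linear_combination -he
  rcases mul_eq_zero.mp h0 with h1 | h1
  · exact ⟨-e, by linarith⟩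
  · exact absurd h1 (by exact_mod_cast hm)

/-- the distinguished corner index -/
def dpt (n : ℕ) : Fin (n+2) × Fin (n+2) := (0, 0)

abbrev Idx (n : ℕ) := {p : Fin (n+2) × Fin (n+2) // p ≠ dpt n}

/-- the homomorphism recording `(g - 1)/m mod m` away from the corner entry -/
def phi (n m : ℕ) (hm : m ≠ 0) :
    ↥(Gamma (n+2) m) →* Multiplicative (Idx n → ZMod m) where
  toFun g := Multiplicative.ofAdd fun p => ((Amat m g.1.1 p.1.1 p.1.2 : ℤ) : ZMod m)
  map_one' := by
    have h0 : Amat m ((1 : ↥(Gamma (n+2) m)) : Matrix.SpecialLinearGroup (Fin (n+2)) ℤ).1 = 0 := by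
      ext i j; simp [Amat]
    show Multiplicative.ofAdd
      (fun p : Idx n => ((Amat m ((1 : ↥(Gamma (n+2) m)) :
        Matrix.SpecialLinearGroup (Fin (n+2)) ℤ).1 p.1.1 p.1.2 : ℤ) : ZMod m)) = 1
    rw [h0]
    simp
    rfl
  map_mul' g h := by
    show Multiplicative.ofAdd _ = Multiplicative.ofAdd _ * Multiplicative.ofAdd _
    rw [← ofAdd_add]
    congr 1
    funext p
    show ((Amat m ((g.1 * h.1 : Matrix.SpecialLinearGroup (Fin (n+2)) ℤ)).1 p.1.1 p.1.2 : ℤ) : ZMod m) = _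
    rw [Amat_mul hm g.2 h.2]
    simp only [Matrix.add_apply, Matrix.smul_apply, smul_eq_mul]
    push_cast
    simp

lemma ker_phi (n m : ℕ) (hm : m ≠ 0) :
    (phi n m hm).ker = (Gamma (n+2) (m^2)).subgroupOf (Gamma (n+2) m) := by
  ext g
  rw [MonoidHom.mem_ker, Subgroup.mem_subgroupOf]
  have hent : ∀ i j, (g.1.1 i j - (1 : Matrix (Fin (n+2)) (Fin (n+2)) ℤ) i j)
      = (m:ℤ) * Amat m g.1.1 i j := by
    intro i j
    have h1 : g.1.1 i j = (1 + (m:ℤ) • Amat m g.1.1) i j := by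
      conv_lhs => rw [Amat_spec hm g.2]
    rw [h1]
    simp only [Matrix.add_apply, Matrix.smul_apply, smul_eq_mul]
    ring
  have hone : (phi n m hm g = 1) ↔
      ∀ p : Idx n, ((Amat m g.1.1 p.1.1 p.1.2 : ℤ) : ZMod m) = 0 := by
    rw [show (phi n m hm g) = Multiplicative.ofAdd
      (fun p : Idx n => ((Amat m g.1.1 p.1.1 p.1.2 : ℤ) : ZMod m)) from rfl]
    rw [ofAdd_eq_one, funext_iff]
    rfl
  rw [hone, mem_Gamma_iff_dvd]
  constructor
  · intro h i j
    rw [hent i j]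
    have hA : (m:ℤ) ∣ Amat m g.1.1 i j := by
      by_cases hp : (i, j) = dpt n
      · obtain ⟨hi0, hj0⟩ := Prod.mk.injEq .. ▸ hp
        subst hi0; subst hj0
        have htr := trace_dvd hm g.2
        have htre : Matrix.trace (Amat m g.1.1)
            = ∑ i, Amat m g.1.1 i i := rfl
        have hsum : (m:ℤ) ∣ ∑ i ∈ Finset.univ.erase (0 : Fin (n+2)), Amat m g.1.1 i i :=
          Finset.dvd_sum (fun i hi => by
            have hne : i ≠ 0 := Finset.ne_of_mem_erase hi
            have := h ⟨(i,i), by simp [dpt, Prod.ext_iff, hne]⟩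
            exact (ZMod.intCast_zmod_eq_zero_iff_dvd _ _).mp this)
        have heq : Amat m g.1.1 0 0 = Matrix.trace (Amat m g.1.1)
            - ∑ i ∈ Finset.univ.erase (0 : Fin (n+2)), Amat m g.1.1 i i := by
          rw [htre, ← Finset.add_sum_erase _ _ (Finset.mem_univ (0 : Fin (n+2)))]
          ring
        rw [heq]
        exact dvd_sub htr hsum
      · exact (ZMod.intCast_zmod_eq_zero_iff_dvd _ _).mp (h ⟨(i,j), hp⟩)
    have : ((m^2 : ℕ) : ℤ) = (m:ℤ) * (m:ℤ) := by push_cast; ring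
    rw [this]
    exact mul_dvd_mul_left _ hA
  · intro h p
    rw [ZMod.intCast_zmod_eq_zero_iff_dvd]
    have h2 := h p.1.1 p.1.2
    rw [hent] at h2
    have hcast : ((m^2 : ℕ) : ℤ) = (m:ℤ) * (m:ℤ) := by push_cast; ring
    rw [hcast] at h2
    exact (mul_dvd_mul_iff_left (show (m:ℤ) ≠ 0 by exact_mod_cast hm)).mp h2

lemma exists_transvection_target (n m : ℕ) (hm : m ≠ 0) (i j : Fin (n+2)) (hij : i ≠ j) (c : ℤ) :
    ∃ g : ↥(Gamma (n+2) m), Amat m g.1.1 = single i j c := by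
  have hmat : transvection i j ((m:ℤ) * c) = 1 + (m:ℤ) • single i j c := by
    rw [Matrix.transvection, Matrix.smul_single, smul_eq_mul]
  have hmem : (⟨transvection i j ((m:ℤ)*c), det_transvection_of_ne i j hij _⟩ :
      Matrix.SpecialLinearGroup (Fin (n+2)) ℤ) ∈ Gamma (n+2) m := by
    refine (mem_Gamma_iff_dvd _ _ _).mpr ?_
    intro a b
    show (m:ℤ) ∣ (transvection i j ((m:ℤ)*c) a b - _)
    rw [hmat]
    simp only [Matrix.add_apply, Matrix.smul_apply, smul_eq_mul, add_sub_cancel_left]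
    exact Dvd.intro _ rfl
  refine ⟨⟨_, hmem⟩, ?_⟩
  show Amat m (transvection i j ((m:ℤ)*c)) = _
  rw [hmat, Amat_one_add m hm]

lemma prod_transvection_eq (n : ℕ) (i : Fin (n+2)) (hi : i ≠ 0) (x : ℤ) :
    (transvection (0:Fin (n+2)) i (1:ℤ)) * (transvection i 0 (-x)) * (transvection 0 i (-1)) =
      1 + (single i i x - single 0 0 x - single i 0 x
        + single 0 i x) := by
  simp only [Matrix.transvection]
  have h1 : single (0:Fin (n+2)) i (1:ℤ) * single i (0:Fin (n+2)) (-x) = single 0 0 (-x) := by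
    rw [Matrix.single_mul_single_same]; ring_nf
  have h2 : single (0:Fin (n+2)) i (1:ℤ) * single 0 i (-1:ℤ) = 0 :=
    Matrix.single_mul_single_of_ne _ _ _ _ hi _
  have h3 : single i (0:Fin (n+2)) (-x) * single 0 i (-1:ℤ) = single i i x := by
    rw [Matrix.single_mul_single_same]; ring_nf
  have h4 : single (0:Fin (n+2)) (0:Fin (n+2)) (-x) * single 0 i (-1:ℤ) = single 0 i x := by
    rw [Matrix.single_mul_single_same]; ring_nf
  have h5 : single (0:Fin (n+2)) i (1:ℤ) + single 0 i (-1:ℤ) = 0 := by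
    rw [← Matrix.single_add]; norm_num
  calc (1 + single (0:Fin (n+2)) i (1:ℤ)) * (1 + single i 0 (-x)) * (1 + single 0 i (-1:ℤ))
      = 1 + (single (0:Fin (n+2)) i (1:ℤ) + single 0 i (-1:ℤ))
        + single i 0 (-x)
        + single (0:Fin (n+2)) i (1:ℤ) * single i (0:Fin (n+2)) (-x)
        + single (0:Fin (n+2)) i (1:ℤ) * single 0 i (-1:ℤ)
        + single i (0:Fin (n+2)) (-x) * single 0 i (-1:ℤ)
        + single (0:Fin (n+2)) i (1:ℤ) * single i (0:Fin (n+2)) (-x) * single 0 i (-1:ℤ) := by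
        noncomm_ring
    _ = 1 + (single i i x - single 0 0 x - single i 0 x + single 0 i x) := by
        rw [h5, h1, h2, h3, h4]
        have h6 : single i (0:Fin (n+2)) (-x) = -single i (0:Fin (n+2)) x := by
          ext a b; simp [Matrix.single]; split <;> simp
        have h7 : single (0:Fin (n+2)) (0:Fin (n+2)) (-x) = -single (0:Fin (n+2)) (0:Fin (n+2)) x := by
          ext a b; simp [Matrix.single]; split <;> simp
        rw [h6, h7]
        abel

lemma exists_diag_target (n m : ℕ) (hm : m ≠ 0) (i : Fin (n+2)) (hi : i ≠ 0) (c : ℤ) :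
    ∃ g : ↥(Gamma (n+2) m), Amat m g.1.1 =
      single i i c - single 0 0 c - single i 0 c + single 0 i c := by
  set N : Matrix (Fin (n+2)) (Fin (n+2)) ℤ :=
    single i i c - single 0 0 c - single i 0 c + single 0 i c with hN
  have hsmul : (m:ℤ) • N = single i i ((m:ℤ)*c) - single 0 0 ((m:ℤ)*c)
      - single i 0 ((m:ℤ)*c) + single 0 i ((m:ℤ)*c) := by
    rw [hN]
    simp only [smul_sub, smul_add, Matrix.smul_single, smul_eq_mul]
  have hprod : (transvection (0:Fin (n+2)) i (1:ℤ)) * (transvection i 0 (-((m:ℤ)*c)))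
      * (transvection 0 i (-1)) = 1 + (m:ℤ) • N := by
    rw [prod_transvection_eq n i hi ((m:ℤ)*c), hsmul]
  set t1 : Matrix.SpecialLinearGroup (Fin (n+2)) ℤ :=
    ⟨transvection 0 i 1, det_transvection_of_ne _ _ (Ne.symm hi) _⟩ with ht1
  set t2 : Matrix.SpecialLinearGroup (Fin (n+2)) ℤ :=
    ⟨transvection i 0 (-((m:ℤ)*c)), det_transvection_of_ne _ _ hi _⟩ with ht2
  set t3 : Matrix.SpecialLinearGroup (Fin (n+2)) ℤ :=
    ⟨transvection 0 i (-1), det_transvection_of_ne _ _ (Ne.symm hi) _⟩ with ht3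
  have hcoe : ((t1 * t2 * t3 : Matrix.SpecialLinearGroup (Fin (n+2)) ℤ)).1 = 1 + (m:ℤ) • N := by
    rw [Matrix.SpecialLinearGroup.coe_mul, Matrix.SpecialLinearGroup.coe_mul, ht1, ht2, ht3]
    exact hprod
  have hmem : (t1 * t2 * t3) ∈ Gamma (n+2) m := by
    rw [mem_Gamma_iff_dvd]
    intro a b
    rw [hcoe]
    simp only [Matrix.add_apply, Matrix.smul_apply, smul_eq_mul, add_sub_cancel_left]
    exact Dvd.intro _ rfl
  refine ⟨⟨_, hmem⟩, ?_⟩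
  show Amat m ((t1 * t2 * t3 : Matrix.SpecialLinearGroup (Fin (n+2)) ℤ)).1 = N
  rw [hcoe, Amat_one_add m hm]

lemma phi_apply (n m : ℕ) (hm : m ≠ 0) (g : ↥(Gamma (n+2) m)) :
    phi n m hm g = Multiplicative.ofAdd
      (fun p : Idx n => ((Amat m g.1.1 p.1.1 p.1.2 : ℤ) : ZMod m)) := rfl

lemma single_offdiag_mem (n m : ℕ) (hm : m ≠ 0) {i j : Fin (n+2)} (hij : i ≠ j)
    (hp : (i,j) ≠ dpt n) (v : ZMod m) :
    Multiplicative.ofAdd (Pi.single (⟨(i,j),hp⟩ : Idx n) v) ∈ (phi n m hm).range := by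
  obtain ⟨c, hc⟩ := ZMod.intCast_surjective (n := m) v
  obtain ⟨g, hg⟩ := exists_transvection_target n m hm i j hij c
  refine ⟨g, ?_⟩
  rw [phi_apply]
  congr 1
  funext p
  rw [hg]
  rcases p with ⟨⟨a,b⟩, hpab⟩
  simp only [Pi.single_apply, Subtype.mk.injEq, Prod.mk.injEq, Matrix.single,
    Matrix.of_apply]
  rcases eq_or_ne a i with rfl | h1
  · rcases eq_or_ne b j with rfl | h2
    · simp [hc]
    · simp [h2, Ne.symm h2]
  · simp [h1, Ne.symm h1]

lemma single_diag_mem (n m : ℕ) (hm : m ≠ 0) {i : Fin (n+2)} (hi : i ≠ 0)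
    (hp : ((i,i) : Fin (n+2) × Fin (n+2)) ≠ dpt n) (v : ZMod m) :
    Multiplicative.ofAdd (Pi.single (⟨(i,i),hp⟩ : Idx n) v) ∈ (phi n m hm).range := by
  obtain ⟨c, hc⟩ := ZMod.intCast_surjective (n := m) v
  obtain ⟨g, hg⟩ := exists_diag_target n m hm i hi c
  have hp2 : ((i,(0:Fin (n+2))) : Fin (n+2) × Fin (n+2)) ≠ dpt n := by
    simp [dpt, Prod.ext_iff, hi]
  have hp3 : (((0:Fin (n+2)),i) : Fin (n+2) × Fin (n+2)) ≠ dpt n := by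
    simp [dpt, Prod.ext_iff, hi]
  have hF : phi n m hm g = Multiplicative.ofAdd
      (Pi.single (⟨(i,i),hp⟩ : Idx n) v + Pi.single (⟨(i,0),hp2⟩ : Idx n) (-v)
        + Pi.single (⟨(0,i),hp3⟩ : Idx n) v) := by
    rw [phi_apply]
    congr 1
    funext p
    rw [hg]
    rcases p with ⟨⟨a,b⟩, hpab⟩
    have hab : ¬(a = 0 ∧ b = 0) := by
      simpa [dpt, Prod.ext_iff] using hpab
    simp only [Matrix.add_apply, Matrix.sub_apply, Matrix.single, Matrix.of_apply,
      Pi.add_apply, Pi.single_apply, Subtype.mk.injEq, Prod.mk.injEq]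
    push_cast
    by_cases h1 : a = i <;> by_cases h2 : b = i <;> by_cases h3 : a = 0 <;> by_cases h4 : b = 0 <;>
      simp_all [eq_comm]
  have key : Multiplicative.ofAdd (Pi.single (⟨(i,i),hp⟩ : Idx n) v)
      = (phi n m hm g) * (Multiplicative.ofAdd (Pi.single (⟨(i,0),hp2⟩ : Idx n) (-v)))⁻¹
        * (Multiplicative.ofAdd (Pi.single (⟨(0,i),hp3⟩ : Idx n) v))⁻¹ := by
    rw [hF, ← ofAdd_neg, ← ofAdd_neg, ← ofAdd_add, ← ofAdd_add]
    congr 1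
    abel
  rw [key]
  exact mul_mem (mul_mem ⟨g, rfl⟩ (inv_mem (single_offdiag_mem n m hm hi hp2 (-v))))
    (inv_mem (single_offdiag_mem n m hm (Ne.symm hi) hp3 v))

lemma phi_surjective (n m : ℕ) (hm : m ≠ 0) : Function.Surjective (phi n m hm) := by
  have hrange : ∀ f : Idx n → ZMod m, Multiplicative.ofAdd f ∈ (phi n m hm).range := by
    intro f
    have hf : f = ∑ p : Idx n, Pi.single p (f p) := (Finset.univ_sum_single f).symm
    rw [hf, ofAdd_sum]
    apply Subgroup.prod_mem
    rintro ⟨⟨a,b⟩, hp⟩ -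
    by_cases hab : a = b
    · subst hab
      have ha : a ≠ 0 := by
        intro h0
        exact hp (by simp [dpt, h0])
      exact single_diag_mem n m hm ha hp _
    · exact single_offdiag_mem n m hm hab hp _
  intro x
  obtain ⟨g, hg⟩ := hrange x.toAdd
  exact ⟨g, by simpa using hg⟩

end GammaAux

/-- The quotient `Γ_n(m) / Γ_n(m²)` is isomorphic to `(ℤ/mℤ)^(n²-1)`. -/
theorem gamma_quotient_iso (n m : ℕ) (hn : 2 ≤ n) (hm : 1 ≤ m) :
    Nonempty
      ((↥(Gamma n m) ⧸ (Gamma n (m ^ 2)).subgroupOf (Gamma n m)) ≃*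
        Multiplicative (Fin (n ^ 2 - 1) → ZMod m)) := by
  obtain ⟨k, rfl⟩ : ∃ k, n = k + 2 := ⟨n - 2, by omega⟩
  have hm0 : m ≠ 0 := by omega
  have hcard : Fintype.card (GammaAux.Idx k) = (k+2)^2 - 1 := by
    have h1 := Fintype.card_subtype_compl (fun p : Fin (k+2) × Fin (k+2) => p = GammaAux.dpt k)
    simp only [Fintype.card_subtype_eq, Fintype.card_prod, Fintype.card_fin] at h1
    have h2 : Fintype.card (GammaAux.Idx k)
        = Fintype.card {p : Fin (k+2) × Fin (k+2) // ¬ p = GammaAux.dpt k} := rfl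
    rw [h2, h1, pow_two]
  let e : GammaAux.Idx k ≃ Fin ((k+2)^2 - 1) := Fintype.equivFinOfCardEq hcard
  refine ⟨?_⟩
  refine (QuotientGroup.quotientMulEquivOfEq (GammaAux.ker_phi k m hm0).symm).trans ?_
  refine (QuotientGroup.quotientKerEquivOfSurjective _ (GammaAux.phi_surjective k m hm0)).trans ?_
  exact AddEquiv.toMultiplicative (RingEquiv.piCongrLeft (fun _ => ZMod m) e).toAddEquiv
end

section
/- Let A be a finite abelian group of order N generated by a set S of k elements, and suppose ε > 0 is such that for every nontrivial irreducible unitary representation (equivalently, every nontrivial character) π of A and every unit vector v, max_{s ∈ S} ‖π(s)v − v‖ ≥ ε. Then ε ≤ 2π/(N^{1/k} − 1). -/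
open Real

lemma norm_exp_mul_I_sub_one_le' (t : ℝ) :
    ‖Complex.exp (t * Complex.I) - 1‖ ≤ |t| := by
  have h1 : Complex.exp (t * Complex.I) - 1
      = ((Real.cos t - 1 : ℝ) : ℂ) + (Real.sin t : ℝ) * Complex.I := by
    rw [Complex.exp_mul_I, ← Complex.ofReal_cos, ← Complex.ofReal_sin]
    push_cast
    ring
  rw [h1]
  have h2 : ‖((Real.cos t - 1 : ℝ) : ℂ) + (Real.sin t : ℝ) * Complex.I‖
      = Real.sqrt ((Real.cos t - 1)^2 + (Real.sin t)^2) := by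
    rw [Complex.norm_def, Complex.normSq_add_mul_I]
  rw [h2, ← Real.sqrt_sq_eq_abs]
  apply Real.sqrt_le_sqrt
  nlinarith [Real.sin_sq_add_cos_sq t, Real.one_sub_sq_div_two_le_cos (x := t)]

lemma norm_sub_le_abs_arg_sub' (z w : ℂ) (hz : ‖z‖ = 1) (hw : ‖w‖ = 1) :
    ‖z - w‖ ≤ |z.arg - w.arg| := by
  have hz' : Complex.exp (z.arg * Complex.I) = z := by
    conv_rhs => rw [← Complex.norm_mul_exp_arg_mul_I z]
    rw [hz]; simp
  have hw' : Complex.exp (w.arg * Complex.I) = w := by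
    conv_rhs => rw [← Complex.norm_mul_exp_arg_mul_I w]
    rw [hw]; simp
  have harg : (w.arg : ℂ) * Complex.I + ((z.arg - w.arg : ℝ) : ℂ) * Complex.I
      = (z.arg : ℂ) * Complex.I := by push_cast; ring
  have key : z - w = Complex.exp ((w.arg : ℂ) * Complex.I)
      * (Complex.exp (((z.arg - w.arg : ℝ) : ℂ) * Complex.I) - 1) := by
    rw [mul_sub, ← Complex.exp_add, harg, mul_one, hz', hw']
  rw [key, norm_mul]
  have h1 : ‖Complex.exp ((w.arg : ℂ) * Complex.I)‖ = 1 := by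
    simp
  rw [h1, one_mul]
  exact norm_exp_mul_I_sub_one_le' _

/-- Upper bound on the Kazhdan constant of a finite abelian group: if `A` is a finite
abelian group of order `N`, generated by a set `S` of `k` elements, and `ε > 0` is such
that every nontrivial character `χ : A → S¹` satisfies `max_{s ∈ S} |χ s - 1| ≥ ε`,
then `ε ≤ 2π / (N^(1/k) - 1)`. -/
theorem kazhdan_const_finite_abelian_upper
    {A : Type*} [CommGroup A] [Fintype A] [Nontrivial A]
    (S : Finset A) (hS : Subgroup.closure (S : Set A) = ⊤)
    (k : ℕ) (hk : S.card = k) (hk0 : 0 < k)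
    (ε : ℝ) (hε : 0 < ε)
    (h : ∀ χ : A →* Circle, χ ≠ 1 →
      ∃ s ∈ S, ε ≤ ‖((χ s : ℂ)) - 1‖) :
    ε ≤ 2 * Real.pi / ((Fintype.card A : ℝ) ^ ((1 : ℝ) / k) - 1) := by
  classical
  have pi_pos := Real.pi_pos
  set n := Fintype.card A with hn
  have hn2 : 2 ≤ n := Fintype.one_lt_card
  set x : ℝ := (n : ℝ) ^ ((1 : ℝ) / k) with hxdef
  have hnpos : (0 : ℝ) < n := by positivity
  have hx1 : 1 < x := by
    rw [hxdef]
    rw [Real.one_lt_rpow_iff_of_pos hnpos]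
    exact Or.inl ⟨by exact_mod_cast hn2, by positivity⟩
  set M : ℕ := ⌈x⌉₊ with hM
  have hM2 : 2 ≤ M := by
    have : 1 < M := Nat.lt_ceil.2 (by exact_mod_cast hx1)
    omega
  set m : ℕ := M - 1 with hm
  have hm1 : 1 ≤ m := by omega
  have hmcast : (m : ℝ) = (M : ℝ) - 1 := by
    rw [hm, Nat.cast_sub (by omega : 1 ≤ M)]; norm_num
  have hmpos : (0 : ℝ) < m := by exact_mod_cast hm1
  have hmx : (m : ℝ) < x := by
    have := Nat.ceil_lt_add_one (show (0:ℝ) ≤ x by linarith)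
    rw [hmcast]; rw [← hM] at this; linarith
  have hxm : x - 1 ≤ m := by
    have := Nat.le_ceil x
    rw [hmcast, ← hM] at *; linarith [Nat.le_ceil x]
  have hxk : x ^ k = (n : ℝ) := by
    rw [hxdef, ← Real.rpow_natCast ((n:ℝ) ^ ((1:ℝ)/k)) k, ← Real.rpow_mul (le_of_lt hnpos),
      one_div, inv_mul_cancel₀ (by exact_mod_cast hk0.ne' : (k : ℝ) ≠ 0), Real.rpow_one]
  have hmkn : m ^ k < n := by
    have h1 : ((m : ℝ)) ^ k < x ^ k := by
      apply pow_lt_pow_left₀ hmx (by positivity) hk0.ne'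
    rw [hxk] at h1
    exact_mod_cast h1
  -- characters
  haveI : Fintype (AddChar (Additive A) Circle) :=
    Fintype.ofEquiv _ AddChar.circleEquivComplex.symm.toEquiv
  have hΦcard : Fintype.card (AddChar (Additive A) Circle) = n := by
    rw [Fintype.card_congr AddChar.circleEquivComplex.toEquiv, AddChar.card_eq]
    exact Fintype.card_congr Additive.toMul
  -- box map
  let F : AddChar (Additive A) Circle → (↥S → Fin m) := fun ψ s =>
    ⟨min ⌊((ψ (Additive.ofMul (s : A)) : ℂ).arg + π) * m / (2 * π)⌋₊ (m - 1),
      lt_of_le_of_lt (min_le_right _ _) (by omega)⟩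
  have hcardlt : Fintype.card (↥S → Fin m) < Fintype.card (AddChar (Additive A) Circle) := by
    rw [hΦcard, Fintype.card_fun, Fintype.card_fin, Fintype.card_coe, hk]
    exact hmkn
  obtain ⟨ψ₁, ψ₂, hne, hFeq⟩ := Fintype.exists_ne_map_eq_of_card_lt F hcardlt
  -- the quotient character
  set η : AddChar (Additive A) Circle := ψ₁ / ψ₂ with hη
  have hη1 : η ≠ 1 := by
    rw [hη]
    exact div_ne_one.2 hne
  let χ : A →* Circle :=
    η.toMonoidHom.comp (MulEquiv.multiplicativeAdditive A).symm.toMonoidHom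
  have hχapp : ∀ a : A, χ a = η (Additive.ofMul a) := fun _ => rfl
  have hχ1 : χ ≠ 1 := by
    intro hcontra
    apply hη1
    apply DFunLike.ext
    intro a
    have := congrArg (fun f : A →* Circle => f (Additive.toMul a)) hcontra
    simpa [hχapp] using this
  obtain ⟨s, hsS, hεs⟩ := h χ hχ1
  set z : Circle := ψ₁ (Additive.ofMul s) with hz
  set w : Circle := ψ₂ (Additive.ofMul s) with hw
  have hχs : (χ s : ℂ) = (z : ℂ) / (w : ℂ) := by
    rw [hχapp, hη, AddChar.div_apply']
    push_cast
    rfl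
  have hnorm : ‖(χ s : ℂ) - 1‖ = ‖(z : ℂ) - (w : ℂ)‖ := by
    rw [hχs]
    have hw0 : (w : ℂ) ≠ 0 := Circle.coe_ne_zero w
    calc ‖(z : ℂ) / (w : ℂ) - 1‖ = ‖((z : ℂ) - (w : ℂ)) / (w : ℂ)‖ := by
          rw [sub_div, div_self hw0]
      _ = ‖(z : ℂ) - (w : ℂ)‖ / ‖(w : ℂ)‖ := norm_div _ _
      _ = ‖(z : ℂ) - (w : ℂ)‖ := by
          rw [show ‖(w : ℂ)‖ = 1 by simpa using Circle.norm_coe w, div_one]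
  -- same box
  have hmin : min ⌊((z : ℂ).arg + π) * m / (2 * π)⌋₊ (m - 1)
      = min ⌊((w : ℂ).arg + π) * m / (2 * π)⌋₊ (m - 1) := by
    have := congrFun hFeq ⟨s, hsS⟩
    exact congrArg Fin.val this
  -- interval bound
  have bound : ∀ u' : ℝ, 0 ≤ u' → u' ≤ m →
      ((min ⌊u'⌋₊ (m - 1) : ℕ) : ℝ) ≤ u' ∧ u' ≤ ((min ⌊u'⌋₊ (m - 1) : ℕ) : ℝ) + 1 := by
    intro u' h0 hm'
    rcases le_or_gt ⌊u'⌋₊ (m - 1) with hle | hlt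
    · rw [min_eq_left hle]
      refine ⟨Nat.floor_le h0, ?_⟩
      have := Nat.lt_floor_add_one u'
      push_cast at this ⊢
      linarith
    · rw [min_eq_right hlt.le]
      have h1 : ((⌊u'⌋₊ : ℕ) : ℝ) ≤ u' := Nat.floor_le h0
      have h2 : (m : ℝ) ≤ ((⌊u'⌋₊ : ℕ) : ℝ) := by
        have : m ≤ ⌊u'⌋₊ := by omega
        exact_mod_cast this
      have h3 : ((m - 1 : ℕ) : ℝ) = (m : ℝ) - 1 := by
        rw [Nat.cast_sub hm1]; norm_num
      rw [h3]
      constructor <;> linarith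
  set a := (z : ℂ).arg with ha
  set b := (w : ℂ).arg with hb
  have ha1 : -π < a := Complex.neg_pi_lt_arg _
  have ha2 : a ≤ π := Complex.arg_le_pi _
  have hb1 : -π < b := Complex.neg_pi_lt_arg _
  have hb2 : b ≤ π := Complex.arg_le_pi _
  set u : ℝ := (a + π) * m / (2 * π) with hu
  set v : ℝ := (b + π) * m / (2 * π) with hv
  have hu0 : 0 ≤ u := by
    apply div_nonneg _ (by positivity)
    apply mul_nonneg (by linarith) (by positivity)
  have hv0 : 0 ≤ v := by
    apply div_nonneg _ (by positivity)
    apply mul_nonneg (by linarith) (by positivity)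
  have hum : u ≤ m := by
    rw [hu, div_le_iff₀ (by positivity)]
    have h2π : a + π ≤ 2 * π := by linarith
    linarith [mul_le_mul_of_nonneg_right h2π hmpos.le]
  have hvm : v ≤ m := by
    rw [hv, div_le_iff₀ (by positivity)]
    have h2π : b + π ≤ 2 * π := by linarith
    linarith [mul_le_mul_of_nonneg_right h2π hmpos.le]
  obtain ⟨hu1, hu2⟩ := bound u hu0 hum
  obtain ⟨hv1, hv2⟩ := bound v hv0 hvm
  rw [hmin] at hu1 hu2
  have huv : |u - v| ≤ 1 := by
    rw [abs_sub_le_iff]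
    constructor <;> linarith
  have hab : |a - b| ≤ 2 * π / m := by
    have heq : u - v = (a - b) * m / (2 * π) := by rw [hu, hv]; ring
    rw [heq] at huv
    rw [abs_div, abs_mul, abs_of_nonneg (by positivity : (0:ℝ) ≤ (m:ℝ)),
      abs_of_nonneg (by positivity : (0:ℝ) ≤ 2 * π)] at huv
    rw [div_le_one (by positivity)] at huv
    rw [le_div_iff₀ hmpos]
    linarith
  have hchord : ‖(z : ℂ) - (w : ℂ)‖ ≤ 2 * π / m :=
    le_trans (norm_sub_le_abs_arg_sub' _ _ (Circle.norm_coe z) (Circle.norm_coe w)) hab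
  have hεm : ε ≤ 2 * π / m := by
    rw [hnorm] at hεs
    linarith
  have hfinal : 2 * π / (m : ℝ) ≤ 2 * π / (x - 1) := by
    apply div_le_div_of_nonneg_left (by positivity) (by linarith) hxm
  linarith
end

section
/- Let n ≥ 3 and m ≥ 1. Every matrix A ∈ Γ_n(m²) can be written as a product E·C, where E is a product of at most 3n − 2 elementary matrices X_{ij}(t) with t divisible by m, and C is (the embedding into SL_n(Z) of) a matrix in Γ_{n−1}(m), i.e., C is block diagonal with an (n−1)×(n−1) block congruent to I mod m and a 1 in the (n,n) entry. -/
open Matrix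

namespace GammaAux

variable {n : ℕ}

/-- Matrix supported on row `i` with entries `c`. -/
def Nrow (i : Fin n) (c : Fin n → ℤ) : Matrix (Fin n) (Fin n) ℤ :=
  Matrix.of fun k l => if k = i then c l else 0

/-- Matrix supported on column `j` with entries `c`. -/
def Ncol (j : Fin n) (c : Fin n → ℤ) : Matrix (Fin n) (Fin n) ℤ :=
  Matrix.of fun k l => if l = j then c k else 0

lemma one_add_Nrow_apply (i : Fin n) (c : Fin n → ℤ) (k l : Fin n) :
    (1 + Nrow i c) k l = (if k = l then 1 else 0) + (if k = i then c l else 0) := by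
  simp [Nrow, Matrix.add_apply, Matrix.one_apply]

lemma one_add_Ncol_apply (j : Fin n) (c : Fin n → ℤ) (k l : Fin n) :
    (1 + Ncol j c) k l = (if k = l then 1 else 0) + (if l = j then c k else 0) := by
  simp [Ncol, Matrix.add_apply, Matrix.one_apply]

lemma one_add_Nrow_mul (i : Fin n) (c : Fin n → ℤ) (M : Matrix (Fin n) (Fin n) ℤ)
    (k l : Fin n) :
    ((1 + Nrow i c) * M) k l = M k l + if k = i then (∑ j, c j * M j l) else 0 := by
  rw [Matrix.add_mul, Matrix.one_mul, Matrix.add_apply]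
  congr 1
  rw [Matrix.mul_apply]
  by_cases h : k = i
  · simp [Nrow, h]
  · simp [Nrow, h]

lemma one_add_Ncol_mul (j : Fin n) (c : Fin n → ℤ) (M : Matrix (Fin n) (Fin n) ℤ)
    (k l : Fin n) :
    ((1 + Ncol j c) * M) k l = M k l + c k * M j l := by
  rw [Matrix.add_mul, Matrix.one_mul, Matrix.add_apply]
  congr 1
  rw [Matrix.mul_apply]
  simp [Ncol, ite_mul]

lemma Nrow_neg (i : Fin n) (c : Fin n → ℤ) : Nrow i (-c) = - Nrow i c := by
  ext k l
  by_cases h : k = i <;> simp [Nrow, h]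

lemma Ncol_neg (j : Fin n) (c : Fin n → ℤ) : Ncol j (-c) = - Ncol j c := by
  ext k l
  by_cases h : l = j <;> simp [Ncol, h]

lemma Nrow_mul_Nrow (i : Fin n) (c c' : Fin n → ℤ) (hc' : c' i = 0)
    (hc : c i = 0) : Nrow i c * Nrow i c' = 0 := by
  ext k l
  rw [Matrix.mul_apply]
  by_cases h : k = i
  · subst h
    simp [Nrow, hc]
  · simp [Nrow, h]

lemma Ncol_mul_Ncol (j : Fin n) (c c' : Fin n → ℤ) (hc' : c' j = 0) :
    Ncol j c * Ncol j c' = 0 := by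
  ext k l
  rw [Matrix.mul_apply]
  by_cases h : l = j
  · subst h
    simp [Ncol, hc']
  · simp [Ncol, h]

lemma one_add_Nrow_inv (i : Fin n) (c : Fin n → ℤ) (hc : c i = 0) :
    (1 + Nrow i (-c)) * (1 + Nrow i c) = 1 := by
  have h0 : Nrow i (-c) * Nrow i c = 0 := by
    apply Nrow_mul_Nrow i _ _ hc
    simp [hc]
  have e : (1 + Nrow i (-c)) * (1 + Nrow i c)
      = 1 + Nrow i (-c) + Nrow i c + Nrow i (-c) * Nrow i c := by
    simp only [Matrix.add_mul, Matrix.mul_add, Matrix.one_mul, Matrix.mul_one]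
    abel
  rw [e, h0, Nrow_neg]
  abel

lemma one_add_Ncol_inv (j : Fin n) (c : Fin n → ℤ) (hc : c j = 0) :
    (1 + Ncol j (-c)) * (1 + Ncol j c) = 1 := by
  have h0 : Ncol j (-c) * Ncol j c = 0 := Ncol_mul_Ncol j _ _ hc
  have e : (1 + Ncol j (-c)) * (1 + Ncol j c)
      = 1 + Ncol j (-c) + Ncol j c + Ncol j (-c) * Ncol j c := by
    simp only [Matrix.add_mul, Matrix.mul_add, Matrix.one_mul, Matrix.mul_one]
    abel
  rw [e, h0, Ncol_neg]
  abel

lemma listSum_apply (L : List (Matrix (Fin n) (Fin n) ℤ)) (k l : Fin n) :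
    L.sum k l = (L.map fun M => M k l).sum := by
  induction L with
  | nil => simp
  | cons M L ih => simp [Matrix.add_apply, ih]

lemma mul_listSum (A : Matrix (Fin n) (Fin n) ℤ) (L : List (Matrix (Fin n) (Fin n) ℤ)) :
    A * L.sum = (L.map fun B => A * B).sum := by
  induction L with
  | nil => simp
  | cons B L ih => simp [Matrix.mul_add, ih]

lemma list_sum_ite {α : Type*} [DecidableEq α] (x : α → ℤ) (v : α) :
    ∀ l : List α, l.Nodup →
      (l.map fun j => if j = v then x j else 0).sum = if v ∈ l then x v else 0 := by
  intro l
  induction l with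
  | nil => simp
  | cons a l ih =>
    intro hnd
    obtain ⟨ha, hl⟩ := List.nodup_cons.mp hnd
    simp only [List.map_cons, List.sum_cons, ih hl]
    by_cases hv : v ∈ l
    · have hav : a ≠ v := fun h => ha (h ▸ hv)
      simp [hv, hav, List.mem_cons]
    · by_cases hav : a = v
      · subst hav
        simp [hv]
      · simp [hv, hav, List.mem_cons, Ne.symm hav]

lemma prod_transvection_row (i : Fin n) (c : Fin n → ℤ) :
    ∀ js : List (Fin n), i ∉ js →
      (js.map fun j => Matrix.transvection i j (c j)).prod =
        1 + (js.map fun j => Matrix.single i j (c j)).sum := by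
  intro js
  induction js with
  | nil => simp
  | cons a l ih =>
    intro hi
    have hia : a ≠ i := fun h => hi (h ▸ List.mem_cons_self)
    have hil : i ∉ l := fun h => hi (List.mem_cons_of_mem _ h)
    have hz : Matrix.single i a (c a) *
        (l.map fun j => Matrix.single i j (c j)).sum = 0 := by
      rw [mul_listSum]
      apply List.sum_eq_zero
      intro x hx
      rw [List.map_map, List.mem_map] at hx
      obtain ⟨j, _, rfl⟩ := hx
      exact Matrix.single_mul_single_of_ne _ _ _ _ hia _
    simp only [List.map_cons, List.prod_cons, List.sum_cons, ih hil]
    show (1 + Matrix.single i a (c a)) * _ = _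
    simp only [Matrix.add_mul, Matrix.one_mul, Matrix.mul_add, Matrix.mul_one, hz]
    abel

lemma sum_stdBasis_row (i : Fin n) (c : Fin n → ℤ) (js : List (Fin n)) (hnd : js.Nodup)
    (hsupp : ∀ j, j ∉ js → c j = 0) :
    (js.map fun j => Matrix.single i j (c j)).sum = Nrow i c := by
  ext k l
  rw [listSum_apply, List.map_map]
  have hfun : ((fun M : Matrix (Fin n) (Fin n) ℤ => M k l) ∘
      fun j => Matrix.single i j (c j)) =
      fun j => if i = k then (if j = l then c j else 0) else 0 := by
    funext j
    by_cases h1 : i = k <;> by_cases h2 : j = l <;>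
      simp [Matrix.single, h1, h2]
  rw [hfun]
  by_cases hk : i = k
  · simp only [hk, if_true]
    rw [list_sum_ite c l js hnd]
    subst hk
    by_cases hl : l ∈ js
    · simp [Nrow, hl]
    · simp [Nrow, hsupp l hl]
  · simp only [hk, if_false]
    rw [show (js.map fun _ => (0:ℤ)) = List.replicate js.length 0 by
      simp [List.eq_replicate_iff]]
    simp only [Nrow, Matrix.of_apply]
    rw [if_neg (fun h : k = i => hk h.symm)]
    simp

lemma sum_stdBasis_col (j : Fin n) (c : Fin n → ℤ) (is : List (Fin n)) (hnd : is.Nodup)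
    (hsupp : ∀ i, i ∉ is → c i = 0) :
    (is.map fun i => Matrix.single i j (c i)).sum = Ncol j c := by
  ext k l
  rw [listSum_apply, List.map_map]
  have hfun : ((fun M : Matrix (Fin n) (Fin n) ℤ => M k l) ∘
      fun i => Matrix.single i j (c i)) =
      fun i => if j = l then (if i = k then c i else 0) else 0 := by
    funext i
    by_cases h1 : j = l <;> by_cases h2 : i = k <;>
      simp [Matrix.single, h1, h2]
  rw [hfun]
  by_cases hl : j = l
  · simp only [hl, if_true]
    rw [list_sum_ite c k is hnd]
    subst hl
    by_cases hk : k ∈ is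
    · simp [Ncol, hk]
    · simp [Ncol, hsupp k hk]
  · simp only [hl, if_false]
    rw [show (is.map fun _ => (0:ℤ)) = List.replicate is.length 0 by
      simp [List.eq_replicate_iff]]
    simp only [Ncol, Matrix.of_apply]
    rw [if_neg (fun h : l = j => hl h.symm)]
    simp

lemma prod_transvection_col (j : Fin n) (c : Fin n → ℤ) :
    ∀ is : List (Fin n), j ∉ is →
      (is.map fun i => Matrix.transvection i j (c i)).prod =
        1 + (is.map fun i => Matrix.single i j (c i)).sum := by
  intro is
  induction is with
  | nil => simp
  | cons a l ih =>
    intro hj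
    have hja : a ≠ j := fun h => hj (h ▸ List.mem_cons_self)
    have hjl : j ∉ l := fun h => hj (List.mem_cons_of_mem _ h)
    have hz : Matrix.single a j (c a) *
        (l.map fun i => Matrix.single i j (c i)).sum = 0 := by
      rw [mul_listSum]
      apply List.sum_eq_zero
      intro x hx
      rw [List.map_map, List.mem_map] at hx
      obtain ⟨i, hi, rfl⟩ := hx
      exact Matrix.single_mul_single_of_ne _ _ _ _ (fun h => hjl (by rw [h]; exact hi)) _
    simp only [List.map_cons, List.prod_cons, List.sum_cons, ih hjl]
    show (1 + Matrix.single a j (c a)) * _ = _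
    simp only [Matrix.add_mul, Matrix.one_mul, Matrix.mul_add, Matrix.mul_one, hz]
    abel


/-- The "elementary with multiplier divisible by m" property. -/
def elemProp (m : ℕ) {n : ℕ} (E : Matrix.SpecialLinearGroup (Fin n) ℤ) : Prop :=
  ∃ (i j : Fin n) (t : ℤ), i ≠ j ∧ (m : ℤ) ∣ t ∧
    (E : Matrix (Fin n) (Fin n) ℤ) = 1 + Matrix.single i j t

lemma slListProd_coe (L : List (Matrix.SpecialLinearGroup (Fin n) ℤ)) :
    (L.prod).val = (L.map Subtype.val).prod := by
  induction L with
  | nil => rfl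
  | cons E L ih =>
    show (E * L.prod).val = (E.val :: L.map Subtype.val).prod
    rw [List.prod_cons, ← ih]
    rfl

lemma rowBundleSL (m : ℕ) (i : Fin n) (js : List (Fin n)) (hi : i ∉ js) (hnd : js.Nodup)
    (c : Fin n → ℤ) (hsupp : ∀ j, j ∉ js → c j = 0) (hdvd : ∀ j, (m:ℤ) ∣ c j) :
    ∃ L : List (Matrix.SpecialLinearGroup (Fin n) ℤ),
      L.length = js.length ∧ (∀ E ∈ L, elemProp m E) ∧
      ((L.prod : Matrix.SpecialLinearGroup (Fin n) ℤ) : Matrix (Fin n) (Fin n) ℤ)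
        = 1 + Nrow i c := by
  classical
  refine ⟨js.attach.map (fun j => ⟨Matrix.transvection i j.1 (c j.1),
    Matrix.det_transvection_of_ne i j.1 (fun h => hi (by rw [h]; exact j.2)) (c j.1)⟩),
    ?_, ?_, ?_⟩
  · exact (List.length_map ..).trans (List.length_attach ..)
  · intro E hE
    obtain ⟨⟨j, hj⟩, _, rfl⟩ := List.mem_map.mp hE
    exact ⟨i, j, c j, fun h => hi (by rw [h]; exact hj), hdvd j, rfl⟩
  · rw [slListProd_coe]
    erw [List.map_map]
    rw [show (Subtype.val ∘
          fun j : {x // x ∈ js} => (⟨Matrix.transvection i j.1 (c j.1),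
            Matrix.det_transvection_of_ne i j.1 (fun h => hi (by rw [h]; exact j.2)) (c j.1)⟩ :
            Matrix.SpecialLinearGroup (Fin n) ℤ))
          = fun j : {x // x ∈ js} => Matrix.transvection i (↑j) (c ↑j) from rfl]
    rw [List.attach_map_val (l := js) (f := fun j => Matrix.transvection i j (c j))]
    rw [prod_transvection_row i c js hi, sum_stdBasis_row i c js hnd hsupp]

lemma colBundleSL (m : ℕ) (j : Fin n) (is : List (Fin n)) (hj : j ∉ is) (hnd : is.Nodup)
    (c : Fin n → ℤ) (hsupp : ∀ i, i ∉ is → c i = 0) (hdvd : ∀ i, (m:ℤ) ∣ c i) :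
    ∃ L : List (Matrix.SpecialLinearGroup (Fin n) ℤ),
      L.length = is.length ∧ (∀ E ∈ L, elemProp m E) ∧
      ((L.prod : Matrix.SpecialLinearGroup (Fin n) ℤ) : Matrix (Fin n) (Fin n) ℤ)
        = 1 + Ncol j c := by
  classical
  refine ⟨is.attach.map (fun i => ⟨Matrix.transvection i.1 j (c i.1),
    Matrix.det_transvection_of_ne i.1 j (fun h => hj (by rw [← h]; exact i.2)) (c i.1)⟩),
    ?_, ?_, ?_⟩
  · exact (List.length_map ..).trans (List.length_attach ..)
  · intro E hE
    obtain ⟨⟨i, hi⟩, _, rfl⟩ := List.mem_map.mp hE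
    exact ⟨i, j, c i, fun h => hj (by rw [← h]; exact hi), hdvd i, rfl⟩
  · rw [slListProd_coe]
    erw [List.map_map]
    rw [show (Subtype.val ∘
          fun i : {x // x ∈ is} => (⟨Matrix.transvection i.1 j (c i.1),
            Matrix.det_transvection_of_ne i.1 j (fun h => hj (by rw [← h]; exact i.2)) (c i.1)⟩ :
            Matrix.SpecialLinearGroup (Fin n) ℤ))
          = fun i : {x // x ∈ is} => Matrix.transvection (↑i) j (c ↑i) from rfl]
    rw [List.attach_map_val (l := is) (f := fun i => Matrix.transvection i j (c i))]
    rw [prod_transvection_col j c is hj, sum_stdBasis_col j c is hnd hsupp]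

lemma phi_one_of_dvd {m : ℕ} {M : Matrix (Fin n) (Fin n) ℤ}
    (h : ∀ i j, (m:ℤ) ∣ (M i j - if i = j then 1 else 0)) :
    M.map (Int.cast : ℤ → ZMod m) = 1 := by
  ext i j
  have h0 : ((M i j - if i = j then 1 else 0 : ℤ) : ZMod m) = 0 :=
    (ZMod.intCast_zmod_eq_zero_iff_dvd _ m).mpr (h i j)
  rw [Int.cast_sub, sub_eq_zero] at h0
  rw [Matrix.map_apply, h0, Matrix.one_apply]
  split_ifs <;> simp

lemma dvd_of_phi_one {m : ℕ} {M : Matrix (Fin n) (Fin n) ℤ}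
    (h : M.map (Int.cast : ℤ → ZMod m) = 1) :
    ∀ i j, (m:ℤ) ∣ (M i j - if i = j then 1 else 0) := by
  intro i j
  rw [← ZMod.intCast_zmod_eq_zero_iff_dvd]
  have h1 : ((M i j : ℤ) : ZMod m) = (1 : Matrix (Fin n) (Fin n) (ZMod m)) i j := by
    rw [← h]; rfl
  rw [Int.cast_sub, h1, Matrix.one_apply]
  split_ifs <;> simp

lemma phi_mul (m : ℕ) (M N' : Matrix (Fin n) (Fin n) ℤ) :
    (M * N').map (Int.cast : ℤ → ZMod m)
      = M.map (Int.cast : ℤ → ZMod m) * N'.map (Int.cast : ℤ → ZMod m) := by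
  have := Matrix.map_mul (L := M) (M := N') (f := Int.castRingHom (ZMod m))
  simpa using this

lemma dvd_one_add_Nrow {m : ℕ} (i : Fin n) (c : Fin n → ℤ) (hd : ∀ j, (m:ℤ) ∣ c j) :
    ∀ k l, (m:ℤ) ∣ ((1 + Nrow i c) k l - if k = l then 1 else 0) := by
  intro k l
  rw [one_add_Nrow_apply]
  have : (if k = l then (1:ℤ) else 0) + (if k = i then c l else 0)
      - (if k = l then 1 else 0) = (if k = i then c l else 0) := by ring
  rw [this]
  split_ifs
  · exact hd l
  · exact dvd_zero _

lemma dvd_one_add_Ncol {m : ℕ} (j : Fin n) (c : Fin n → ℤ) (hd : ∀ k, (m:ℤ) ∣ c k) :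
    ∀ k l, (m:ℤ) ∣ ((1 + Ncol j c) k l - if k = l then 1 else 0) := by
  intro k l
  rw [one_add_Ncol_apply]
  have : (if k = l then (1:ℤ) else 0) + (if l = j then c k else 0)
      - (if k = l then 1 else 0) = (if l = j then c k else 0) := by ring
  rw [this]
  split_ifs
  · exact hd k
  · exact dvd_zero _

/-- n-ary Bézout over a `Finset`. -/
lemma finset_gcd_bezout (S : Finset (Fin n)) (f : Fin n → ℤ) :
    ∃ c : Fin n → ℤ, (∀ j, j ∉ S → c j = 0) ∧ ∑ j ∈ S, c j * f j = S.gcd f := by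
  classical
  induction S using Finset.induction_on with
  | empty => exact ⟨0, fun _ _ => rfl, by simp⟩
  | @insert a S ha ih =>
    obtain ⟨c, hc0, hcs⟩ := ih
    set A := Int.gcdA (f a) (S.gcd f)
    set B := Int.gcdB (f a) (S.gcd f)
    refine ⟨fun j => if j = a then A else c j * B, ?_, ?_⟩
    · intro j hj
      have hja : j ≠ a := fun h => hj (h ▸ Finset.mem_insert_self a S)
      have hjS : j ∉ S := fun h => hj (Finset.mem_insert_of_mem h)
      simp [hja, hc0 j hjS]
    · rw [Finset.sum_insert ha, Finset.gcd_insert]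
      have hcongr : ∀ j ∈ S, (if j = a then A else c j * B) * f j = (c j * f j) * B := by
        intro j hj
        have hja : j ≠ a := fun h => ha (h ▸ hj)
        rw [if_neg hja]; ring
      rw [Finset.sum_congr rfl hcongr, ← Finset.sum_mul, hcs]
      show (if a = a then A else c a * B) * f a + S.gcd f * B = _
      rw [if_pos rfl, ← Int.coe_gcd, Int.gcd_eq_gcd_ab (f a) (S.gcd f)]
      ring

/-- Avoidance lemma: we can shift `x` by a multiple of `y` to become coprime to `N`. -/
lemma exists_coprime_add_mul (x y N : ℤ) (hN : N ≠ 0)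
    (h : ∀ p : ℕ, p.Prime → (p:ℤ) ∣ x → (p:ℤ) ∣ y → (p:ℤ) ∣ N → False) :
    ∃ s : ℤ, IsCoprime (x + s * y) N := by
  classical
  set s0 : ℕ := ∏ p ∈ N.natAbs.primeFactors.filter (fun p : ℕ => ¬ ((p:ℤ) ∣ x)), p with hs0
  refine ⟨(s0 : ℤ), ?_⟩
  rw [Int.isCoprime_iff_gcd_eq_one]
  by_contra hg
  obtain ⟨q, hq, hqd⟩ := Nat.exists_prime_and_dvd hg
  have hq1 : (q:ℤ) ∣ x + (s0:ℤ) * y :=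
    dvd_trans (Int.natCast_dvd_natCast.mpr hqd) (Int.gcd_dvd_left _ _)
  have hq2 : (q:ℤ) ∣ N :=
    dvd_trans (Int.natCast_dvd_natCast.mpr hqd) (Int.gcd_dvd_right _ _)
  have hqint : Prime (q:ℤ) := Nat.prime_iff_prime_int.mp hq
  by_cases hx : (q:ℤ) ∣ x
  · have hqs : ¬ (q:ℤ) ∣ (s0:ℤ) := by
      intro hdvd
      rw [Int.natCast_dvd_natCast, hs0] at hdvd
      obtain ⟨p, hpmem, hqp⟩ := (hq.prime.dvd_finset_prod_iff _).mp hdvd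
      rw [Finset.mem_filter, Nat.mem_primeFactors] at hpmem
      have hqep : q = p := (Nat.prime_dvd_prime_iff_eq hq hpmem.1.1).mp hqp
      exact hpmem.2 (hqep ▸ hx)
    have hy : (q:ℤ) ∣ y := by
      have hsy : (q:ℤ) ∣ (s0:ℤ) * y := by
        have h3 := dvd_sub hq1 hx
        simpa using h3
      exact (hqint.dvd_mul.mp hsy).resolve_left hqs
    exact h q hq hx hy hq2
  · have hqmem : q ∈ N.natAbs.primeFactors.filter (fun p : ℕ => ¬ ((p:ℤ) ∣ x)) := by
      rw [Finset.mem_filter, Nat.mem_primeFactors]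
      refine ⟨⟨hq, ?_, ?_⟩, hx⟩
      · rw [← Int.natAbs_natCast q, Int.natAbs_dvd_natAbs]
        exact hq2
      · simpa using hN
    have hqs : (q:ℤ) ∣ (s0:ℤ) :=
      Int.natCast_dvd_natCast.mpr (Finset.dvd_prod_of_mem _ hqmem)
    exact hx (by
      have h2 : (q:ℤ) ∣ (s0:ℤ) * y := hqs.mul_right y
      have h3 := dvd_sub hq1 h2
      simpa using h3)

lemma continuation (m : ℕ) (ℓ : Fin n)
    (B : Matrix.SpecialLinearGroup (Fin n) ℤ)
    (h1 : (B : Matrix (Fin n) (Fin n) ℤ) ℓ ℓ = 1)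
    (h2 : ∀ i, i ≠ ℓ → (m:ℤ) ∣ (B : Matrix (Fin n) (Fin n) ℤ) i ℓ)
    (h3 : (B : Matrix (Fin n) (Fin n) ℤ).map (Int.cast : ℤ → ZMod m) = 1) :
    ∃ L : List (Matrix.SpecialLinearGroup (Fin n) ℤ),
      L.length = (n - 1) + (n - 1) ∧ (∀ E ∈ L, elemProp m E) ∧
      ∃ C : Matrix.SpecialLinearGroup (Fin n) ℤ,
        (∀ i j, (m:ℤ) ∣ ((C : Matrix (Fin n) (Fin n) ℤ) i j - if i = j then 1 else 0)) ∧
        (∀ i, i ≠ ℓ → (C : Matrix (Fin n) (Fin n) ℤ) i ℓ = 0 ∧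
          (C : Matrix (Fin n) (Fin n) ℤ) ℓ i = 0) ∧
        (C : Matrix (Fin n) (Fin n) ℤ) ℓ ℓ = 1 ∧
        B = L.prod * C := by
  classical
  set js : List (Fin n) := (List.finRange n).erase ℓ with hjs
  have hnd : js.Nodup := List.Nodup.erase ℓ (List.nodup_finRange n)
  have hljs : ℓ ∉ js := (List.nodup_finRange n).not_mem_erase
  have hmem : ∀ j : Fin n, j ≠ ℓ → j ∈ js := fun j hj =>
    (List.mem_erase_of_ne hj).mpr (List.mem_finRange j)
  have hlen : js.length = n - 1 := by
    rw [hjs, List.length_erase_of_mem (List.mem_finRange ℓ), List.length_finRange]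
  have hBm := (B : Matrix (Fin n) (Fin n) ℤ)
  set Bm := (B : Matrix (Fin n) (Fin n) ℤ) with hBmdef
  -- stage 3 : clear the last column
  set c3 : Fin n → ℤ := fun i => if i = ℓ then 0 else -(Bm i ℓ) with hc3
  have hc3l : c3 ℓ = 0 := by simp [hc3]
  have hc3supp : ∀ i, i ∉ js → c3 i = 0 := by
    intro i hi
    have hil : i = ℓ := by by_contra h; exact hi (hmem i h)
    simp [hc3, hil]
  have hc3dvd : ∀ i, (m:ℤ) ∣ c3 i := by
    intro i
    by_cases hil : i = ℓ
    · simp [hc3, hil]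
    · simp only [hc3, if_neg hil]
      exact dvd_neg.mpr (h2 i hil)
  obtain ⟨L3, hL3len, hL3elem, hL3prod⟩ := colBundleSL m ℓ js hljs hnd c3 hc3supp hc3dvd
  obtain ⟨L3', hL3'len, hL3'elem, hL3'prod⟩ := colBundleSL m ℓ js hljs hnd (-c3)
    (fun i hi => by simp [hc3supp i hi]) (fun i => by rw [Pi.neg_apply]; exact dvd_neg.mpr (hc3dvd i))
  set A3 := L3.prod * B with hA3
  set A3m := (A3 : Matrix (Fin n) (Fin n) ℤ) with hA3mdef
  have hA3mul : A3m = (1 + Ncol ℓ c3) * Bm := by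
    rw [hA3mdef, hA3, Matrix.SpecialLinearGroup.coe_mul, hL3prod]
  have hA3e : ∀ k l, A3m k l = Bm k l + c3 k * Bm ℓ l := by
    intro k l
    rw [hA3mul, one_add_Ncol_mul]
  have hA3col : ∀ i, i ≠ ℓ → A3m i ℓ = 0 := by
    intro i hi
    rw [hA3e, h1, hc3]
    simp [hi]
  have hA3row : ∀ l, A3m ℓ l = Bm ℓ l := by
    intro l
    rw [hA3e, hc3l]
    ring
  have hA3ll : A3m ℓ ℓ = 1 := by rw [hA3row, h1]
  have hphi3 : A3m.map (Int.cast : ℤ → ZMod m) = 1 := by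
    rw [hA3mul, phi_mul, phi_one_of_dvd (dvd_one_add_Ncol ℓ c3 hc3dvd), h3,
      one_mul]
  -- the inverse of A3
  set Dm := ((A3⁻¹ : Matrix.SpecialLinearGroup (Fin n) ℤ) : Matrix (Fin n) (Fin n) ℤ)
    with hDmdef
  have hDA3 : Dm * A3m = 1 := by
    rw [hDmdef, hA3mdef, ← Matrix.SpecialLinearGroup.coe_mul, inv_mul_cancel,
      Matrix.SpecialLinearGroup.coe_one]
  have hphiD : Dm.map (Int.cast : ℤ → ZMod m) = 1 := by
    have h := congrArg (fun M : Matrix (Fin n) (Fin n) ℤ => M.map (Int.cast : ℤ → ZMod m)) hDA3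
    simp only [phi_mul, hphi3, mul_one] at h
    rw [h]
    exact phi_one_of_dvd (by intro i j; rw [Matrix.one_apply]; split_ifs <;> simp)
  have hDll : Dm ℓ ℓ = 1 := by
    have h := Matrix.ext_iff.mpr hDA3 ℓ ℓ
    rw [Matrix.mul_apply] at h
    rw [Finset.sum_eq_single ℓ (fun b _ hb => by rw [hA3col b hb, mul_zero])
      (fun h' => absurd (Finset.mem_univ ℓ) h'), hA3ll, mul_one] at h
    rw [h, Matrix.one_apply_eq]
  -- stage 4 : clear the last row
  set c4 : Fin n → ℤ := fun j => if j = ℓ then 0 else Dm ℓ j with hc4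
  have hc4l : c4 ℓ = 0 := by simp [hc4]
  have hc4supp : ∀ j, j ∉ js → c4 j = 0 := by
    intro j hj
    have hjl : j = ℓ := by by_contra h; exact hj (hmem j h)
    simp [hc4, hjl]
  have hc4dvd : ∀ j, (m:ℤ) ∣ c4 j := by
    intro j
    by_cases hjl : j = ℓ
    · simp [hc4, hjl]
    · simp only [hc4, if_neg hjl]
      have := dvd_of_phi_one hphiD ℓ j
      rw [if_neg (fun h => hjl h.symm), sub_zero] at this
      exact this
  obtain ⟨L4, hL4len, hL4elem, hL4prod⟩ := rowBundleSL m ℓ js hljs hnd c4 hc4supp hc4dvd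
  obtain ⟨L4', hL4'len, hL4'elem, hL4'prod⟩ := rowBundleSL m ℓ js hljs hnd (-c4)
    (fun j hj => by simp [hc4supp j hj]) (fun j => by rw [Pi.neg_apply]; exact dvd_neg.mpr (hc4dvd j))
  set C := L4.prod * A3 with hC
  set Cm := (C : Matrix (Fin n) (Fin n) ℤ) with hCmdef
  have hCmul : Cm = (1 + Nrow ℓ c4) * A3m := by
    rw [hCmdef, hC, Matrix.SpecialLinearGroup.coe_mul, hL4prod, ← hA3mdef]
  have hCe : ∀ k l, Cm k l = A3m k l + if k = ℓ then (∑ j, c4 j * A3m j l) else 0 := by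
    intro k l
    rw [hCmul, one_add_Nrow_mul]
  have hCrow : ∀ l, Cm ℓ l = if ℓ = l then 1 else 0 := by
    intro l
    have e1 : ∑ j, c4 j * A3m j l = ∑ j ∈ Finset.univ.erase ℓ, Dm ℓ j * A3m j l := by
      rw [← Finset.add_sum_erase _ (fun j => c4 j * A3m j l) (Finset.mem_univ ℓ)]
      rw [show c4 ℓ * A3m ℓ l = 0 by rw [hc4l, zero_mul], zero_add]
      exact Finset.sum_congr rfl (fun j hj => by
        rw [show c4 j = Dm ℓ j by rw [hc4]; exact if_neg (Finset.ne_of_mem_erase hj)])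
    have e2 : ∑ j ∈ Finset.univ.erase ℓ, Dm ℓ j * A3m j l
        = (∑ j, Dm ℓ j * A3m j l) - Dm ℓ ℓ * A3m ℓ l := by
      rw [← Finset.add_sum_erase _ (fun j => Dm ℓ j * A3m j l) (Finset.mem_univ ℓ)]
      ring
    have e3 : ∑ j, Dm ℓ j * A3m j l = if ℓ = l then 1 else 0 := by
      have h := Matrix.ext_iff.mpr hDA3 ℓ l
      rw [Matrix.mul_apply] at h
      rw [h, Matrix.one_apply]
    rw [hCe, if_pos rfl, e1, e2, e3, hDll, one_mul, hA3row]
    ring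
  have hCcol : ∀ i, i ≠ ℓ → Cm i ℓ = 0 := by
    intro i hi
    rw [hCe, if_neg hi, add_zero, hA3col i hi]
  have hphiC : Cm.map (Int.cast : ℤ → ZMod m) = 1 := by
    rw [hCmul, phi_mul, phi_one_of_dvd (dvd_one_add_Nrow ℓ c4 hc4dvd), hphi3, one_mul]
  -- inverses
  have hinv3 : L3'.prod * L3.prod = 1 := by
    apply Subtype.ext
    show ((L3'.prod * L3.prod : Matrix.SpecialLinearGroup (Fin n) ℤ) :
      Matrix (Fin n) (Fin n) ℤ) = ((1 : Matrix.SpecialLinearGroup (Fin n) ℤ) :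
      Matrix (Fin n) (Fin n) ℤ)
    rw [Matrix.SpecialLinearGroup.coe_mul, hL3'prod, hL3prod,
      Matrix.SpecialLinearGroup.coe_one]
    exact one_add_Ncol_inv ℓ c3 hc3l
  have hinv4 : L4'.prod * L4.prod = 1 := by
    apply Subtype.ext
    show ((L4'.prod * L4.prod : Matrix.SpecialLinearGroup (Fin n) ℤ) :
      Matrix (Fin n) (Fin n) ℤ) = ((1 : Matrix.SpecialLinearGroup (Fin n) ℤ) :
      Matrix (Fin n) (Fin n) ℤ)
    rw [Matrix.SpecialLinearGroup.coe_mul, hL4'prod, hL4prod,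
      Matrix.SpecialLinearGroup.coe_one]
    exact one_add_Nrow_inv ℓ c4 hc4l
  refine ⟨L3' ++ L4', ?_, ?_, C, ?_, ?_, ?_, ?_⟩
  · rw [List.length_append, hL3'len, hL4'len, hlen]
  · intro E hE
    rcases List.mem_append.mp hE with h | h
    · exact hL3'elem E h
    · exact hL4'elem E h
  · exact fun i j => dvd_of_phi_one hphiC i j
  · intro i hi
    refine ⟨hCcol i hi, ?_⟩
    show Cm ℓ i = 0
    rw [hCrow i, if_neg (fun h => hi h.symm)]
  · show Cm ℓ ℓ = 1
    rw [hCrow ℓ, if_pos rfl]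
  · rw [List.prod_append, mul_assoc]
    have hstep : L4'.prod * (L4.prod * A3) = A3 := by
      rw [← mul_assoc, hinv4, one_mul]
    rw [hC, hstep, hA3, ← mul_assoc, hinv3, one_mul]

end GammaAux
set_option maxHeartbeats 2000000 in
open Matrix GammaAux in
/-- Every `A ∈ Γ_n(m²)` (n ≥ 3) is a product `E·C` where `E` is a product of at most
`3n-2` elementary matrices `X i j t = I + t·E i j` with `m ∣ t`, and `C` is the image of
a matrix of `Γ_{n-1}(m)` embedded in the upper-left block (last row and column of `C`
are those of the identity, and `C ≡ I mod m`). -/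
theorem gamma_m_sq_bounded_product (n m : ℕ) (hn : 3 ≤ n) (hm : 1 ≤ m)
    (A : Matrix.SpecialLinearGroup (Fin n) ℤ)
    (hA : ∀ i j : Fin n,
      ((m : ℤ) ^ 2) ∣ ((A : Matrix (Fin n) (Fin n) ℤ) i j - if i = j then 1 else 0)) :
    ∃ L : List (Matrix.SpecialLinearGroup (Fin n) ℤ),
      L.length ≤ 3 * n - 2 ∧
      (∀ E ∈ L, ∃ (i j : Fin n) (t : ℤ), i ≠ j ∧ (m : ℤ) ∣ t ∧
        (E : Matrix (Fin n) (Fin n) ℤ) = 1 + Matrix.single i j t) ∧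
      ∃ C : Matrix.SpecialLinearGroup (Fin n) ℤ,
        (∀ i j : Fin n,
          (m : ℤ) ∣ ((C : Matrix (Fin n) (Fin n) ℤ) i j - if i = j then 1 else 0)) ∧
        (∀ i : Fin n, i ≠ ⟨n - 1, by omega⟩ →
          (C : Matrix (Fin n) (Fin n) ℤ) i ⟨n - 1, by omega⟩ = 0 ∧
          (C : Matrix (Fin n) (Fin n) ℤ) ⟨n - 1, by omega⟩ i = 0) ∧
        (C : Matrix (Fin n) (Fin n) ℤ) ⟨n - 1, by omega⟩ ⟨n - 1, by omega⟩ = 1 ∧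
        A = L.prod * C := by
  classical
  set ℓ : Fin n := ⟨n - 1, by omega⟩ with hℓ
  set i0 : Fin n := ⟨0, by omega⟩ with hi0
  set i1 : Fin n := ⟨1, by omega⟩ with hi1
  have hi0ℓ : i0 ≠ ℓ := by
    simp only [hi0, hℓ, Ne, Fin.mk.injEq]
    omega
  have hi1ℓ : i1 ≠ ℓ := by
    simp only [hi1, hℓ, Ne, Fin.mk.injEq]
    omega
  have hi01 : i0 ≠ i1 := by
    simp only [hi0, hi1, Ne, Fin.mk.injEq]
    omega
  set Am := (A : Matrix (Fin n) (Fin n) ℤ) with hAm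
  have hbex : ∀ i : Fin n, ∃ v : ℤ,
      Am i ℓ - (if i = ℓ then 1 else 0) = (m:ℤ)^2 * v := fun i => hA i ℓ
  choose b hb using hbex
  have hbi : ∀ i, i ≠ ℓ → Am i ℓ = (m:ℤ)^2 * b i := by
    intro i hi
    have h := hb i
    rwa [if_neg hi, sub_zero] at h
  set a := b ℓ with ha
  have hAll : Am ℓ ℓ = 1 + (m:ℤ)^2 * a := by
    have h := hb ℓ
    rw [if_pos rfl] at h
    linarith
  set w : Fin n → ℤ := fun j =>
    ((A⁻¹ : Matrix.SpecialLinearGroup (Fin n) ℤ) : Matrix (Fin n) (Fin n) ℤ) ℓ j with hw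
  have hwsum : ∑ j, w j * Am j ℓ = 1 := by
    have hinv : ((A⁻¹ : Matrix.SpecialLinearGroup (Fin n) ℤ) :
        Matrix (Fin n) (Fin n) ℤ) * Am = 1 := by
      rw [hAm, ← Matrix.SpecialLinearGroup.coe_mul, inv_mul_cancel,
        Matrix.SpecialLinearGroup.coe_one]
    have h := Matrix.ext_iff.mpr hinv ℓ ℓ
    rw [Matrix.mul_apply, Matrix.one_apply_eq] at h
    exact h
  have hphiA : Am.map (Int.cast : ℤ → ZMod m) = 1 :=
    phi_one_of_dvd (fun i j => dvd_trans (⟨(m:ℤ), by ring⟩ : (m:ℤ) ∣ (m:ℤ)^2) (hA i j))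
  set S : Finset (Fin n) := (Finset.univ.erase ℓ).erase i0 with hS
  have hSmem : ∀ j : Fin n, j ∈ S ↔ (j ≠ i0 ∧ j ≠ ℓ) := by
    intro j
    rw [hS, Finset.mem_erase, Finset.mem_erase]
    simp
  have hi0memeℓ : i0 ∈ Finset.univ.erase ℓ := Finset.mem_erase.mpr ⟨hi0ℓ, Finset.mem_univ i0⟩
  have hsplit : ∀ f : Fin n → ℤ, ∑ j, f j = f i0 + f ℓ + ∑ j ∈ S, f j := by
    intro f
    rw [← Finset.add_sum_erase _ f (Finset.mem_univ ℓ), ← Finset.add_sum_erase _ f hi0memeℓ,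
      ← hS]
    ring
  have hsingle : ∀ (v : ℤ) (p : Fin n) (g : Fin n → ℤ),
      (∑ j, (if j = p then v else 0) * g j) = v * g p := by
    intro v p g
    simp [ite_mul]
  -- the list of non-pivot indices
  set js2 : List (Fin n) := (List.finRange n).erase ℓ with hjs2
  have hnd2 : js2.Nodup := List.Nodup.erase ℓ (List.nodup_finRange n)
  have hljs2 : ℓ ∉ js2 := (List.nodup_finRange n).not_mem_erase
  have hmem2 : ∀ j : Fin n, j ≠ ℓ → j ∈ js2 := fun j hj =>
    (List.mem_erase_of_ne hj).mpr (List.mem_finRange j)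
  have hlen2 : js2.length = n - 1 := by
    rw [hjs2, List.length_erase_of_mem (List.mem_finRange ℓ), List.length_finRange]
  set H := S.gcd (fun j => (m:ℤ) * b j) with hH
  have main : ∃ (Lpre : List (Matrix.SpecialLinearGroup (Fin n) ℤ))
      (A2 : Matrix.SpecialLinearGroup (Fin n) ℤ),
      Lpre.length ≤ n ∧ (∀ E ∈ Lpre, elemProp m E) ∧
      (A2 : Matrix (Fin n) (Fin n) ℤ) ℓ ℓ = 1 ∧
      (∀ i, i ≠ ℓ → (m:ℤ) ∣ (A2 : Matrix (Fin n) (Fin n) ℤ) i ℓ) ∧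
      ((A2 : Matrix (Fin n) (Fin n) ℤ).map (Int.cast : ℤ → ZMod m) = 1) ∧
      A = Lpre.prod * A2 := by
    by_cases hH0 : H = 0
    · -- degenerate case : all of column ℓ outside rows i0, ℓ vanishes
      have hg0 : ∀ j ∈ S, (m:ℤ) * b j = 0 :=
        Finset.gcd_eq_zero_iff.mp (by rw [← hH]; exact hH0)
      have hzero : ∀ j ∈ S, Am j ℓ = 0 := by
        intro j hj
        obtain ⟨hj0, hjℓ⟩ := (hSmem j).mp hj
        rw [hbi j hjℓ, show (m:ℤ)^2 * b j = (m:ℤ) * ((m:ℤ) * b j) by ring, hg0 j hj,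
          mul_zero]
      have hcomb : w i0 * Am i0 ℓ + w ℓ * Am ℓ ℓ = 1 := by
        have h := hwsum
        rw [hsplit (fun j => w j * Am j ℓ)] at h
        have hz : ∑ j ∈ S, w j * Am j ℓ = 0 :=
          Finset.sum_eq_zero (fun j hj => by rw [hzero j hj, mul_zero])
        rw [hz] at h
        linarith
      -- stage a : row i1 += (m * w i0) * row i0
      set ca : Fin n → ℤ := fun j => if j = i0 then (m:ℤ) * w i0 else 0 with hca
      have hcasupp : ∀ j, j ∉ [i0] → ca j = 0 := by
        intro j hj
        rw [List.mem_singleton] at hj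
        simp [hca, hj]
      have hcadvd : ∀ j, (m:ℤ) ∣ ca j := by
        intro j
        rw [hca]
        dsimp only
        split_ifs
        · exact ⟨w i0, rfl⟩
        · exact dvd_zero _
      have hi1a : i1 ∉ [i0] := by
        simp only [List.mem_singleton]
        exact fun h => hi01 h.symm
      obtain ⟨La, hLalen, hLaelem, hLaprod⟩ :=
        rowBundleSL m i1 [i0] hi1a (List.nodup_singleton i0) ca hcasupp hcadvd
      obtain ⟨La', hLa'len, hLa'elem, hLa'prod⟩ :=
        rowBundleSL m i1 [i0] hi1a (List.nodup_singleton i0) (-ca)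
          (fun j hj => by simp [hcasupp j hj])
          (fun j => by rw [Pi.neg_apply]; exact dvd_neg.mpr (hcadvd j))
      set A1a := La.prod * A with hA1a
      set A1am := (A1a : Matrix (Fin n) (Fin n) ℤ) with hA1amdef
      have hA1amul : A1am = (1 + Nrow i1 ca) * Am := by
        rw [hA1amdef, hA1a, Matrix.SpecialLinearGroup.coe_mul, hLaprod, ← hAm]
      have hA1ar : ∀ k l, k ≠ i1 → A1am k l = Am k l := by
        intro k l hk
        rw [hA1amul, one_add_Nrow_mul, if_neg hk, add_zero]
      have hA1ai1 : A1am i1 ℓ = (m:ℤ) * (w i0 * Am i0 ℓ) := by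
        rw [hA1amul, one_add_Nrow_mul, if_pos rfl]
        have hz : Am i1 ℓ = 0 := hzero i1 ((hSmem i1).mpr ⟨fun h => hi01 h.symm, hi1ℓ⟩)
        rw [hz, zero_add, hca]
        rw [hsingle ((m:ℤ) * w i0) i0 (fun j => Am j ℓ)]
        ring
      -- stage b : row i1 += (m * w ℓ) * row ℓ
      set cb : Fin n → ℤ := fun j => if j = ℓ then (m:ℤ) * w ℓ else 0 with hcb
      have hcbsupp : ∀ j, j ∉ [ℓ] → cb j = 0 := by
        intro j hj
        rw [List.mem_singleton] at hj
        simp [hcb, hj]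
      have hcbdvd : ∀ j, (m:ℤ) ∣ cb j := by
        intro j
        rw [hcb]
        dsimp only
        split_ifs
        · exact ⟨w ℓ, rfl⟩
        · exact dvd_zero _
      have hi1b : i1 ∉ [ℓ] := by simp [hi1ℓ]
      obtain ⟨Lb, hLblen, hLbelem, hLbprod⟩ :=
        rowBundleSL m i1 [ℓ] hi1b (List.nodup_singleton ℓ) cb hcbsupp hcbdvd
      obtain ⟨Lb', hLb'len, hLb'elem, hLb'prod⟩ :=
        rowBundleSL m i1 [ℓ] hi1b (List.nodup_singleton ℓ) (-cb)
          (fun j hj => by simp [hcbsupp j hj])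
          (fun j => by rw [Pi.neg_apply]; exact dvd_neg.mpr (hcbdvd j))
      set A1b := Lb.prod * A1a with hA1b
      set A1bm := (A1b : Matrix (Fin n) (Fin n) ℤ) with hA1bmdef
      have hA1bmul : A1bm = (1 + Nrow i1 cb) * A1am := by
        rw [hA1bmdef, hA1b, Matrix.SpecialLinearGroup.coe_mul, hLbprod, ← hA1amdef]
      have hA1br : ∀ k l, k ≠ i1 → A1bm k l = A1am k l := by
        intro k l hk
        rw [hA1bmul, one_add_Nrow_mul, if_neg hk, add_zero]
      have hA1bi1 : A1bm i1 ℓ = (m:ℤ) := by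
        rw [hA1bmul, one_add_Nrow_mul, if_pos rfl, hA1ai1, hcb]
        rw [hsingle ((m:ℤ) * w ℓ) ℓ (fun j => A1am j ℓ)]
        rw [hA1ar ℓ ℓ (fun h => hi1ℓ h.symm)]
        have : (m:ℤ) * (w i0 * Am i0 ℓ) + (m:ℤ) * w ℓ * Am ℓ ℓ
            = (m:ℤ) * (w i0 * Am i0 ℓ + w ℓ * Am ℓ ℓ) := by ring
        rw [this, hcomb, mul_one]
      -- stage c : row ℓ += (m * (-a)) * row i1
      set cc' : Fin n → ℤ := fun j => if j = i1 then (m:ℤ) * (-a) else 0 with hcc'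
      have hccsupp : ∀ j, j ∉ [i1] → cc' j = 0 := by
        intro j hj
        rw [List.mem_singleton] at hj
        simp [hcc', hj]
      have hccdvd : ∀ j, (m:ℤ) ∣ cc' j := by
        intro j
        rw [hcc']
        dsimp only
        split_ifs
        · exact ⟨-a, rfl⟩
        · exact dvd_zero _
      have hℓc : ℓ ∉ [i1] := by
        simp only [List.mem_singleton]
        exact fun h => hi1ℓ h.symm
      obtain ⟨Lc, hLclen, hLcelem, hLcprod⟩ :=
        rowBundleSL m ℓ [i1] hℓc (List.nodup_singleton i1) cc' hccsupp hccdvd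
      obtain ⟨Lc', hLc'len, hLc'elem, hLc'prod⟩ :=
        rowBundleSL m ℓ [i1] hℓc (List.nodup_singleton i1) (-cc')
          (fun j hj => by simp [hccsupp j hj])
          (fun j => by rw [Pi.neg_apply]; exact dvd_neg.mpr (hccdvd j))
      set A2 := Lc.prod * A1b with hA2
      set A2m := (A2 : Matrix (Fin n) (Fin n) ℤ) with hA2mdef
      have hA2mul : A2m = (1 + Nrow ℓ cc') * A1bm := by
        rw [hA2mdef, hA2, Matrix.SpecialLinearGroup.coe_mul, hLcprod, ← hA1bmdef]
      have hA2r : ∀ k l, k ≠ ℓ → A2m k l = A1bm k l := by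
        intro k l hk
        rw [hA2mul, one_add_Nrow_mul, if_neg hk, add_zero]
      have hA2ll : A2m ℓ ℓ = 1 := by
        rw [hA2mul, one_add_Nrow_mul, if_pos rfl, hcc']
        rw [hsingle ((m:ℤ) * (-a)) i1 (fun j => A1bm j ℓ)]
        rw [hA1bi1, hA1br ℓ ℓ (fun h => hi1ℓ h.symm), hA1ar ℓ ℓ (fun h => hi1ℓ h.symm), hAll]
        ring
      have hA2col : ∀ i, i ≠ ℓ → (m:ℤ) ∣ A2m i ℓ := by
        intro i hi
        rw [hA2r i ℓ hi]
        by_cases hii1 : i = i1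
        · subst hii1
          rw [hA1bi1]
        · rw [hA1br i ℓ hii1, hA1ar i ℓ hii1, hbi i hi]
          exact ⟨(m:ℤ) * b i, by ring⟩
      have hphiA2 : A2m.map (Int.cast : ℤ → ZMod m) = 1 := by
        rw [hA2mul, phi_mul, phi_one_of_dvd (dvd_one_add_Nrow ℓ cc' hccdvd), one_mul,
          hA1bmul, phi_mul, phi_one_of_dvd (dvd_one_add_Nrow i1 cb hcbdvd), one_mul,
          hA1amul, phi_mul, phi_one_of_dvd (dvd_one_add_Nrow i1 ca hcadvd), one_mul, hphiA]
      have hinva : La'.prod * La.prod = 1 := by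
        apply Subtype.ext
        show ((La'.prod * La.prod : Matrix.SpecialLinearGroup (Fin n) ℤ) :
          Matrix (Fin n) (Fin n) ℤ) = ((1 : Matrix.SpecialLinearGroup (Fin n) ℤ) :
          Matrix (Fin n) (Fin n) ℤ)
        rw [Matrix.SpecialLinearGroup.coe_mul, hLa'prod, hLaprod,
          Matrix.SpecialLinearGroup.coe_one]
        exact one_add_Nrow_inv i1 ca (by rw [hca]; exact if_neg (fun h => hi01 h.symm))
      have hinvb : Lb'.prod * Lb.prod = 1 := by
        apply Subtype.ext
        show ((Lb'.prod * Lb.prod : Matrix.SpecialLinearGroup (Fin n) ℤ) :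
          Matrix (Fin n) (Fin n) ℤ) = ((1 : Matrix.SpecialLinearGroup (Fin n) ℤ) :
          Matrix (Fin n) (Fin n) ℤ)
        rw [Matrix.SpecialLinearGroup.coe_mul, hLb'prod, hLbprod,
          Matrix.SpecialLinearGroup.coe_one]
        exact one_add_Nrow_inv i1 cb (by simp [hcb, hi1ℓ])
      have hinvc : Lc'.prod * Lc.prod = 1 := by
        apply Subtype.ext
        show ((Lc'.prod * Lc.prod : Matrix.SpecialLinearGroup (Fin n) ℤ) :
          Matrix (Fin n) (Fin n) ℤ) = ((1 : Matrix.SpecialLinearGroup (Fin n) ℤ) :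
          Matrix (Fin n) (Fin n) ℤ)
        rw [Matrix.SpecialLinearGroup.coe_mul, hLc'prod, hLcprod,
          Matrix.SpecialLinearGroup.coe_one]
        exact one_add_Nrow_inv ℓ cc' (by rw [hcc']; exact if_neg (fun h => hi1ℓ h.symm))
      refine ⟨(La' ++ Lb') ++ Lc', A2, ?_, ?_, hA2ll, hA2col, hphiA2, ?_⟩
      · rw [List.length_append, List.length_append, hLa'len, hLb'len, hLc'len]
        simp only [List.length_singleton]
        omega
      · intro E hE
        rcases List.mem_append.mp hE with h | h
        · rcases List.mem_append.mp h with h' | h'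
          · exact hLa'elem E h'
          · exact hLb'elem E h'
        · exact hLc'elem E h
      · rw [List.prod_append, List.prod_append, hA2, hA1b, hA1a]
        rw [mul_assoc, mul_assoc]
        rw [show Lc'.prod * (Lc.prod * (Lb.prod * (La.prod * A)))
            = Lb.prod * (La.prod * A) by rw [← mul_assoc, hinvc, one_mul]]
        rw [show Lb'.prod * (Lb.prod * (La.prod * A)) = La.prod * A by
          rw [← mul_assoc, hinvb, one_mul]]
        rw [← mul_assoc, hinva, one_mul]
    · -- main case
      have hcop : ∀ p : ℕ, p.Prime → (p:ℤ) ∣ ((m:ℤ) * b i0) → (p:ℤ) ∣ Am ℓ ℓ →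
          (p:ℤ) ∣ H → False := by
        intro p hp h1 h2 h3
        have hdvd1 : (p:ℤ) ∣ 1 := by
          rw [← hwsum]
          apply Finset.dvd_sum
          intro j _
          by_cases hj0 : j = i0
          · subst hj0
            refine Dvd.dvd.mul_left ?_ _
            rw [hbi i0 hi0ℓ]
            exact h1.trans ⟨(m:ℤ), by ring⟩
          · by_cases hjℓ : j = ℓ
            · subst hjℓ
              exact h2.mul_left _
            · have hjS : j ∈ S := (hSmem j).mpr ⟨hj0, hjℓ⟩
              refine Dvd.dvd.mul_left ?_ _
              rw [hbi j hjℓ]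
              exact (h3.trans (Finset.gcd_dvd hjS)).trans ⟨(m:ℤ), by ring⟩
        exact (Nat.prime_iff_prime_int.mp hp).not_dvd_one hdvd1
      obtain ⟨s, hcops⟩ := exists_coprime_add_mul ((m:ℤ) * b i0) (Am ℓ ℓ) H hH0 hcop
      set u := (m:ℤ) * b i0 + s * Am ℓ ℓ with hu
      obtain ⟨α, β, hαβ⟩ := hcops
      obtain ⟨cc, hcc0, hccsum⟩ := finset_gcd_bezout S (fun j => (m:ℤ) * b j)
      set t : Fin n → ℤ :=
        fun j => if j = i0 then -a * α else if j = ℓ then 0 else (-a * β) * cc j with ht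
      have hti0 : t i0 = -a * α := by simp [ht]
      have htℓ : t ℓ = 0 := by
        rw [ht]
        dsimp only
        rw [if_neg (fun h => hi0ℓ h.symm), if_pos rfl]
      have hkey : t i0 * u + ∑ j ∈ S, t j * ((m:ℤ) * b j) = -a := by
        have h2 : ∑ j ∈ S, t j * ((m:ℤ) * b j)
            = (-a * β) * ∑ j ∈ S, cc j * ((m:ℤ) * b j) := by
          rw [Finset.mul_sum]
          apply Finset.sum_congr rfl
          intro j hj
          obtain ⟨hj0, hjℓ⟩ := (hSmem j).mp hj
          rw [ht]
          dsimp only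
          rw [if_neg hj0, if_neg hjℓ]
          ring
        rw [hti0, h2, hccsum, ← hH]
        linear_combination (-a) * hαβ
      -- stage 1 : seed row i0 from row ℓ
      set c1 : Fin n → ℤ := fun j => if j = ℓ then (m:ℤ) * s else 0 with hc1
      have hc1supp : ∀ j, j ∉ [ℓ] → c1 j = 0 := by
        intro j hj
        rw [List.mem_singleton] at hj
        simp [hc1, hj]
      have hc1dvd : ∀ j, (m:ℤ) ∣ c1 j := by
        intro j
        rw [hc1]
        dsimp only
        split_ifs
        · exact ⟨s, rfl⟩
        · exact dvd_zero _
      have hi0nl : i0 ∉ [ℓ] := by simp [hi0ℓ]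
      obtain ⟨L1, hL1len, hL1elem, hL1prod⟩ :=
        rowBundleSL m i0 [ℓ] hi0nl (List.nodup_singleton ℓ) c1 hc1supp hc1dvd
      obtain ⟨L1', hL1'len, hL1'elem, hL1'prod⟩ :=
        rowBundleSL m i0 [ℓ] hi0nl (List.nodup_singleton ℓ) (-c1)
          (fun j hj => by simp [hc1supp j hj])
          (fun j => by rw [Pi.neg_apply]; exact dvd_neg.mpr (hc1dvd j))
      set A1 := L1.prod * A with hA1
      set A1m := (A1 : Matrix (Fin n) (Fin n) ℤ) with hA1mdef
      have hA1mul : A1m = (1 + Nrow i0 c1) * Am := by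
        rw [hA1mdef, hA1, Matrix.SpecialLinearGroup.coe_mul, hL1prod, ← hAm]
      have hA1r : ∀ k l, k ≠ i0 → A1m k l = Am k l := by
        intro k l hk
        rw [hA1mul, one_add_Nrow_mul, if_neg hk, add_zero]
      have hA1i0ℓ : A1m i0 ℓ = (m:ℤ) * u := by
        rw [hA1mul, one_add_Nrow_mul, if_pos rfl, hc1]
        rw [hsingle ((m:ℤ) * s) ℓ (fun j => Am j ℓ)]
        rw [hbi i0 hi0ℓ, hu]
        ring
      -- stage 2 : fix the pivot
      set c2 : Fin n → ℤ := fun j => if j = ℓ then 0 else (m:ℤ) * t j with hc2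
      have hc2ℓ : c2 ℓ = 0 := by simp [hc2]
      have hc2supp : ∀ j, j ∉ js2 → c2 j = 0 := by
        intro j hj
        have hjl : j = ℓ := by by_contra h; exact hj (hmem2 j h)
        simp [hc2, hjl]
      have hc2dvd : ∀ j, (m:ℤ) ∣ c2 j := by
        intro j
        rw [hc2]
        dsimp only
        split_ifs
        · exact dvd_zero _
        · exact ⟨t j, rfl⟩
      obtain ⟨L2, hL2len, hL2elem, hL2prod⟩ :=
        rowBundleSL m ℓ js2 hljs2 hnd2 c2 hc2supp hc2dvd
      obtain ⟨L2', hL2'len, hL2'elem, hL2'prod⟩ :=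
        rowBundleSL m ℓ js2 hljs2 hnd2 (-c2)
          (fun j hj => by simp [hc2supp j hj])
          (fun j => by rw [Pi.neg_apply]; exact dvd_neg.mpr (hc2dvd j))
      set A2 := L2.prod * A1 with hA2
      set A2m := (A2 : Matrix (Fin n) (Fin n) ℤ) with hA2mdef
      have hA2mul : A2m = (1 + Nrow ℓ c2) * A1m := by
        rw [hA2mdef, hA2, Matrix.SpecialLinearGroup.coe_mul, hL2prod, ← hA1mdef]
      have hA2r : ∀ k l, k ≠ ℓ → A2m k l = A1m k l := by
        intro k l hk
        rw [hA2mul, one_add_Nrow_mul, if_neg hk, add_zero]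
      have hA2ll : A2m ℓ ℓ = 1 := by
        rw [hA2mul, one_add_Nrow_mul, if_pos rfl]
        have hsum2 : ∑ j, c2 j * A1m j ℓ
            = (m:ℤ)^2 * (t i0 * u + ∑ j ∈ S, t j * ((m:ℤ) * b j)) := by
          rw [hsplit (fun j => c2 j * A1m j ℓ)]
          have e0 : c2 i0 * A1m i0 ℓ = (m:ℤ)^2 * (t i0 * u) := by
            rw [hc2]
            dsimp only
            rw [if_neg hi0ℓ, hA1i0ℓ]
            ring
          have eℓ : c2 ℓ * A1m ℓ ℓ = 0 := by rw [hc2ℓ, zero_mul]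
          have eS : ∑ j ∈ S, c2 j * A1m j ℓ
              = (m:ℤ)^2 * ∑ j ∈ S, t j * ((m:ℤ) * b j) := by
            rw [Finset.mul_sum]
            apply Finset.sum_congr rfl
            intro j hj
            obtain ⟨hj0, hjℓ⟩ := (hSmem j).mp hj
            rw [hc2]
            dsimp only
            rw [if_neg hjℓ, hA1r j ℓ hj0, hbi j hjℓ]
            ring
          rw [e0, eℓ, eS]
          ring
        rw [hsum2, hkey, hA1r ℓ ℓ (fun h => hi0ℓ h.symm), hAll]
        ring
      have hA2col : ∀ i, i ≠ ℓ → (m:ℤ) ∣ A2m i ℓ := by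
        intro i hi
        rw [hA2r i ℓ hi]
        by_cases hii0 : i = i0
        · subst hii0
          rw [hA1i0ℓ]
          exact ⟨u, rfl⟩
        · rw [hA1r i ℓ hii0, hbi i hi]
          exact ⟨(m:ℤ) * b i, by ring⟩
      have hphiA2 : A2m.map (Int.cast : ℤ → ZMod m) = 1 := by
        rw [hA2mul, phi_mul, phi_one_of_dvd (dvd_one_add_Nrow ℓ c2 hc2dvd), one_mul,
          hA1mul, phi_mul, phi_one_of_dvd (dvd_one_add_Nrow i0 c1 hc1dvd), one_mul, hphiA]
      have hinv1 : L1'.prod * L1.prod = 1 := by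
        apply Subtype.ext
        show ((L1'.prod * L1.prod : Matrix.SpecialLinearGroup (Fin n) ℤ) :
          Matrix (Fin n) (Fin n) ℤ) = ((1 : Matrix.SpecialLinearGroup (Fin n) ℤ) :
          Matrix (Fin n) (Fin n) ℤ)
        rw [Matrix.SpecialLinearGroup.coe_mul, hL1'prod, hL1prod,
          Matrix.SpecialLinearGroup.coe_one]
        exact one_add_Nrow_inv i0 c1 (by simp [hc1, hi0ℓ])
      have hinv2 : L2'.prod * L2.prod = 1 := by
        apply Subtype.ext
        show ((L2'.prod * L2.prod : Matrix.SpecialLinearGroup (Fin n) ℤ) :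
          Matrix (Fin n) (Fin n) ℤ) = ((1 : Matrix.SpecialLinearGroup (Fin n) ℤ) :
          Matrix (Fin n) (Fin n) ℤ)
        rw [Matrix.SpecialLinearGroup.coe_mul, hL2'prod, hL2prod,
          Matrix.SpecialLinearGroup.coe_one]
        exact one_add_Nrow_inv ℓ c2 hc2ℓ
      refine ⟨L1' ++ L2', A2, ?_, ?_, hA2ll, hA2col, hphiA2, ?_⟩
      · rw [List.length_append, hL1'len, hL2'len, hlen2]
        simp only [List.length_singleton]
        omega
      · intro E hE
        rcases List.mem_append.mp hE with h | h
        · exact hL1'elem E h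
        · exact hL2'elem E h
      · rw [List.prod_append, hA2, hA1, mul_assoc]
        rw [show L2'.prod * (L2.prod * (L1.prod * A)) = L1.prod * A by
          rw [← mul_assoc, hinv2, one_mul]]
        rw [← mul_assoc, hinv1, one_mul]
  obtain ⟨Lpre, A2, hpl, hpe, h21, h22, h23, hfac⟩ := main
  obtain ⟨Lpost, hpostlen, hposte, C, hC1, hC2, hC3, hC4⟩ := continuation m ℓ A2 h21 h22 h23
  refine ⟨Lpre ++ Lpost, ?_, ?_, C, hC1, hC2, hC3, ?_⟩
  · rw [List.length_append, hpostlen]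
    omega
  · intro E hE
    rcases List.mem_append.mp hE with h | h
    · exact hpe E h
    · exact hposte E h
  · rw [List.prod_append, mul_assoc, ← hC4, hfac]
end

section
/- Let p be a prime and n ≥ 2. Every finite index subgroup H of the principal congruence subgroup Γ_n(p) ≤ SL_n(Z) admits a surjective group homomorphism onto the cyclic group Z/pZ. -/
section Aux

/-- Key congruence: in any ring, if `A ≡ 1 mod p` then `A ^ (p ^ j) ≡ 1 mod p ^ (j+1)`. -/
lemma aux_pow_dvd_pow_sub_one {R : Type*} [Ring R] (p : ℕ) (j : ℕ) (A : R)
    (h : (p : R) ∣ A - 1) : ((p : R)) ^ (j + 1) ∣ A ^ p ^ j - 1 := by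
  induction j with
  | zero => simpa using h
  | succ j ih =>
    obtain ⟨B, hB⟩ := ih
    have hC : A ^ p ^ (j + 1) = ((p : R) ^ (j + 1) * B + 1) ^ p := by
      rw [pow_succ, pow_mul]
      congr 1
      rw [← hB, sub_add_cancel]
    set D : R := (p : R) ^ (j + 1) * B with hD
    have hcomm : Commute D (1 : R) := Commute.one_right D
    rw [hC, hcomm.add_pow]
    have hsum : ∑ m ∈ Finset.range (p + 1), D ^ m * 1 ^ (p - m) * (p.choose m : R)
        = (∑ m ∈ Finset.range p, D ^ (m + 1) * (p.choose (m + 1) : R)) + 1 := by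
      rw [Finset.sum_range_succ']
      simp
    rw [hsum, add_sub_cancel_right]
    apply Finset.dvd_sum
    intro m _
    have hcent : ∀ x : R, Commute ((p : R)) x := fun x => (Nat.cast_commute p x)
    rcases Nat.eq_zero_or_pos m with rfl | hm
    · rw [pow_one, Nat.choose_one_right]
      refine ⟨B, ?_⟩
      rw [hD, mul_assoc, ← (hcent B).eq, ← mul_assoc, ← pow_succ]
    · have hcomm2 : Commute ((p : R) ^ (j + 1)) B := (Commute.pow_left (hcent B) _)
      have hDpow : D ^ (m + 1) = ((p : R) ^ (j + 1)) ^ (m + 1) * B ^ (m + 1) := hcomm2.mul_pow _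
      rw [hDpow]
      have hdvd : ((p : R)) ^ (j + 1 + 1) ∣ ((p : R) ^ (j + 1)) ^ (m + 1) := by
        rw [← pow_mul]
        exact pow_dvd_pow _ (by nlinarith)
      exact (hdvd.mul_right _).mul_right _

/-- Entrywise divisibility gives divisibility in the matrix ring. -/
lemma aux_matrix_dvd_of_entry_dvd {n : ℕ} (c : ℤ) (M : Matrix (Fin n) (Fin n) ℤ)
    (h : ∀ i j, c ∣ M i j) : (c : Matrix (Fin n) (Fin n) ℤ) ∣ M := by
  refine ⟨Matrix.of fun i j => M i j / c, ?_⟩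
  rw [← zsmul_eq_mul]
  ext i j
  simp only [Matrix.smul_apply, Matrix.of_apply, smul_eq_mul]
  exact (Int.mul_ediv_cancel' (h i j)).symm

/-- Divisibility in the matrix ring gives entrywise divisibility. -/
lemma aux_entry_dvd_of_matrix_dvd {n : ℕ} (c : ℤ) (M : Matrix (Fin n) (Fin n) ℤ)
    (h : (c : Matrix (Fin n) (Fin n) ℤ) ∣ M) (i j : Fin n) : c ∣ M i j := by
  obtain ⟨B, hB⟩ := h
  rw [hB, ← zsmul_eq_mul]
  exact ⟨B i j, by simp⟩

lemma exp_p_surj {p : ℕ} (hp : p.Prime) (V : Type) [CommGroup V] (hnt : Nontrivial V)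
    (hVp : ∀ v : V, v ^ p = 1) :
    ∃ φ : V →* Multiplicative (ZMod p), Function.Surjective φ := by
  haveI : Fact p.Prime := ⟨hp⟩
  haveI : NeZero p := ⟨hp.ne_zero⟩
  haveI : Module (ZMod p) (Additive V) := AddCommGroup.zmodModule (by
    intro x
    apply Additive.toMul.injective
    simpa [toMul_nsmul] using hVp x.toMul)
  haveI : Nontrivial (Additive V) := hnt
  let b := Module.Basis.ofVectorSpace (ZMod p) (Additive V)
  obtain ⟨i⟩ := b.index_nonempty
  have hsurjlin : Function.Surjective (fun x : Additive V => b.coord i x) := by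
    intro c
    exact ⟨c • b i, by simp⟩
  let e : Multiplicative (Additive V) ≃* V := MulEquiv.multiplicativeAdditive _
  refine ⟨(AddMonoidHom.toMultiplicative (b.coord i).toAddMonoidHom).comp e.symm.toMonoidHom, ?_⟩
  refine Function.Surjective.comp ?_ e.symm.surjective
  intro c
  obtain ⟨x, hx⟩ := hsurjlin c.toAdd
  exact ⟨Multiplicative.ofAdd x, by
    exact congrArg Multiplicative.ofAdd hx⟩

lemma abelian_pgroup_surj {p : ℕ} (hp : p.Prime) (G : Type) [CommGroup G] [Finite G]
    (hG : IsPGroup p G) (hnt : Nontrivial G) :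
    ∃ φ : G →* Multiplicative (ZMod p), Function.Surjective φ := by
  haveI : Fact p.Prime := ⟨hp⟩
  set N : Subgroup G := (powMonoidHom p : G →* G).range with hN
  have hNtop : N ≠ ⊤ := by
    intro htop
    have hsurj : Function.Surjective (powMonoidHom p : G →* G) := by
      intro g
      have : g ∈ N := by rw [htop]; exact Subgroup.mem_top g
      exact this
    have hinj : Function.Injective (powMonoidHom p : G →* G) :=
      Finite.injective_iff_surjective.mpr hsurj
    haveI : Fintype G := Fintype.ofFinite G
    have hdvd : p ∣ Fintype.card G := by
      obtain ⟨m, hm0, hm⟩ := hG.nontrivial_iff_card.mp hnt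
      rw [Nat.card_eq_fintype_card] at hm
      exact hm ▸ dvd_pow_self p hm0.ne'
    obtain ⟨a, ha⟩ := exists_prime_orderOf_dvd_card p hdvd
    have ha1 : a ≠ 1 := by
      intro h1
      rw [h1, orderOf_one] at ha
      exact hp.one_lt.ne ha
    have hap : a ^ p = 1 := by rw [← ha, pow_orderOf_eq_one]
    exact ha1 (hinj (show (powMonoidHom p) a = (powMonoidHom p) 1 by
      simp [powMonoidHom_apply, hap]))
  have hVnt : Nontrivial (G ⧸ N) := by
    obtain ⟨g, hg⟩ : ∃ g : G, g ∉ N := by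
      by_contra hc
      push_neg at hc
      exact hNtop ((Subgroup.eq_top_iff' N).mpr hc)
    exact ⟨(g : G ⧸ N), 1, by simpa [QuotientGroup.eq_one_iff] using hg⟩
  have hVp : ∀ v : G ⧸ N, v ^ p = 1 := by
    intro v
    induction v using QuotientGroup.induction_on with
    | H g =>
      rw [← QuotientGroup.mk_pow, QuotientGroup.eq_one_iff]
      exact ⟨g, rfl⟩
  obtain ⟨φ', hφ'⟩ := exp_p_surj hp (G ⧸ N) hVnt hVp
  exact ⟨φ'.comp (QuotientGroup.mk' N), hφ'.comp (QuotientGroup.mk'_surjective N)⟩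

lemma pgroup_surj {p : ℕ} (hp : p.Prime) :
    ∀ (c : ℕ) (G : Type) (_ : Group G) (_ : Finite G), Nat.card G = c →
      IsPGroup p G → Nontrivial G →
      ∃ φ : G →* Multiplicative (ZMod p), Function.Surjective φ := by
  intro c
  induction c using Nat.strong_induction_on with
  | _ c ih =>
    intro G _ _ hcard hG hnt
    haveI : Fact p.Prime := ⟨hp⟩
    by_cases hZ : Subgroup.center G = ⊤
    · letI : CommGroup G := Group.commGroupOfCenterEqTop hZ
      exact abelian_pgroup_surj hp G hG hnt
    · haveI hZnt : Nontrivial (Subgroup.center G) := hG.center_nontrivial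
      set Z := Subgroup.center G with hZdef
      have hq : Nat.card (G ⧸ Z) < c := by
        rw [← hcard]
        have hmul := Subgroup.card_eq_card_quotient_mul_card_subgroup Z
        have h1 : 1 < Nat.card Z := Finite.one_lt_card
        have hpos : 0 < Nat.card (G ⧸ Z) := Nat.card_pos
        calc Nat.card (G ⧸ Z) < Nat.card (G ⧸ Z) * Nat.card Z := by
              exact lt_mul_of_one_lt_right hpos h1
          _ = Nat.card G := hmul.symm
      have hntq : Nontrivial (G ⧸ Z) := by
        obtain ⟨g, hg⟩ : ∃ g : G, g ∉ Z := by
          by_contra hc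
          push_neg at hc
          exact hZ ((Subgroup.eq_top_iff' Z).mpr hc)
        exact ⟨(g : G ⧸ Z), 1, by simpa [QuotientGroup.eq_one_iff] using hg⟩
      obtain ⟨φ, hφ⟩ := ih _ hq (G ⧸ Z) _ (Quotient.finite _) rfl (hG.to_quotient Z) hntq
      exact ⟨φ.comp (QuotientGroup.mk' Z), hφ.comp (QuotientGroup.mk'_surjective Z)⟩

/-- `Γ_n(p)` membership gives entrywise congruence to the identity mod `p`. -/
lemma aux_gamma_dvd {n p : ℕ} (g : Matrix.SpecialLinearGroup (Fin n) ℤ)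
    (hg : g ∈ Gamma n p) :
    ((p : ℕ) : Matrix (Fin n) (Fin n) ℤ) ∣ ((g : Matrix (Fin n) (Fin n) ℤ) - 1) := by
  have hmat : (Int.castRingHom (ZMod p)).mapMatrix (g : Matrix (Fin n) (Fin n) ℤ) = 1 := by
    have h1 : Matrix.SpecialLinearGroup.map (Int.castRingHom (ZMod p)) g = 1 :=
      MonoidHom.mem_ker.mp hg
    have h2 := congrArg
      (fun m : Matrix.SpecialLinearGroup (Fin n) (ZMod p) => (m : Matrix (Fin n) (Fin n) (ZMod p)))
      h1
    simpa using h2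
  have hcast : (((p : ℕ) : ℤ) : Matrix (Fin n) (Fin n) ℤ)
      = ((p : ℕ) : Matrix (Fin n) (Fin n) ℤ) := by push_cast; rfl
  rw [← hcast]
  apply aux_matrix_dvd_of_entry_dvd
  intro i j
  have hentry : (((g : Matrix (Fin n) (Fin n) ℤ) i j : ℤ) : ZMod p)
      = (1 : Matrix (Fin n) (Fin n) (ZMod p)) i j := by
    rw [← hmat]
    simp [RingHom.mapMatrix_apply, Matrix.map_apply]
  rw [← ZMod.intCast_zmod_eq_zero_iff_dvd]
  rcases eq_or_ne i j with rfl | hij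
  · simp only [Matrix.sub_apply, Matrix.one_apply_eq] at *
    push_cast
    rw [hentry]
    simp
  · simp only [Matrix.sub_apply, Matrix.one_apply_ne hij] at *
    push_cast
    rw [hentry]
    simp [Matrix.one_apply_ne hij]

/-- If all entries of `M - 1` are divisible by `q`, then `M` reduces to `1` mod `q`. -/
lemma aux_map_eq_one {n q : ℕ} (M : Matrix (Fin n) (Fin n) ℤ)
    (h : ∀ i j, ((q : ℕ) : ℤ) ∣ (M - 1) i j) :
    (Int.castRingHom (ZMod q)).mapMatrix M = 1 := by
  ext i j
  have h0 : (((M - 1) i j : ℤ) : ZMod q) = 0 :=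
    (ZMod.intCast_zmod_eq_zero_iff_dvd _ q).mpr (h i j)
  simp only [Matrix.sub_apply, Int.cast_sub] at h0
  have h1 : ((M i j : ℤ) : ZMod q) = (((1 : Matrix (Fin n) (Fin n) ℤ) i j : ℤ) : ZMod q) := by
    linear_combination h0
  simp only [RingHom.mapMatrix_apply, Matrix.map_apply, Int.coe_castRingHom]
  rw [h1]
  rcases eq_or_ne i j with rfl | hij
  · simp
  · simp [Matrix.one_apply_ne hij]

end Aux

/-- Every finite index subgroup of the principal congruence subgroup `Γ_n(p)` (p prime)
surjects onto the cyclic group `ℤ/pℤ`. -/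
theorem finite_index_subgroup_surjects_onto_Cp (p : ℕ) (hp : p.Prime)
    (n : ℕ) (hn : 2 ≤ n) (H : Subgroup ↥(Gamma n p)) (hH : H.FiniteIndex) :
    ∃ φ : ↥H →* Multiplicative (ZMod p), Function.Surjective φ := by
  haveI : Fact p.Prime := ⟨hp⟩
  have hp0 : (p : ℤ) ≠ 0 := by exact_mod_cast hp.ne_zero
  -- two distinct indices
  set i0 : Fin n := ⟨0, by omega⟩ with hi0
  set i1 : Fin n := ⟨1, by omega⟩ with hi1
  have h01 : i0 ≠ i1 := by simp [hi0, hi1, Fin.ext_iff]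
  -- a family of transvections showing `Γ_n(p)` is infinite
  have hdet : ∀ m : ℤ, (Matrix.transvection i0 i1 (m * p)).det = 1 := fun m =>
    Matrix.det_transvection_of_ne i0 i1 h01 (m * p)
  set T : ℤ → Matrix.SpecialLinearGroup (Fin n) ℤ := fun m =>
    ⟨Matrix.transvection i0 i1 (m * p), hdet m⟩ with hT
  have hTmem : ∀ m : ℤ, T m ∈ Gamma n p := by
    intro m
    refine MonoidHom.mem_ker.mpr (Subtype.ext ?_)
    show (Int.castRingHom (ZMod p)).mapMatrix (Matrix.transvection i0 i1 (m * p)) = _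
    rw [show ((1 : Matrix.SpecialLinearGroup (Fin n) (ZMod p)) : Matrix (Fin n) (Fin n) (ZMod p))
      = 1 from rfl]
    have hcast0 : ((m * (p : ℤ) : ℤ) : ZMod p) = 0 := by
      push_cast
      simp [ZMod.natCast_self]
    ext i j
    simp only [RingHom.mapMatrix_apply, Matrix.map_apply, Int.coe_castRingHom,
      Matrix.transvection, Matrix.add_apply, Int.cast_add]
    rcases eq_or_ne i j with rfl | hij
    · simp [Matrix.single_apply_of_ne, Matrix.one_apply_eq, h01,
        Matrix.single, hcast0]
    · simp only [Matrix.one_apply_ne hij, Int.cast_zero, zero_add]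
      simp [Matrix.single, hcast0]
  have hTinj : Function.Injective (fun m : ℤ => (⟨T m, hTmem m⟩ : ↥(Gamma n p))) := by
    intro a b hab
    have h1 : T a = T b := congrArg Subtype.val hab
    have h2 : Matrix.transvection i0 i1 (a * p) = Matrix.transvection i0 i1 (b * p) :=
      congrArg Subtype.val h1
    have h3 := congrFun (congrFun h2 i0) i1
    simp only [Matrix.transvection, Matrix.add_apply, Matrix.one_apply_ne h01,
      Matrix.single_apply_same, zero_add] at h3
    exact mul_right_cancel₀ hp0 h3
  haveI hGinf : Infinite ↥(Gamma n p) := Infinite.of_injective _ hTinj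
  -- a nontrivial element of H
  obtain ⟨h, hhH, hh1⟩ : ∃ h : ↥(Gamma n p), h ∈ H ∧ h ≠ 1 := by
    by_contra hcon
    push_neg at hcon
    have hbot : H = ⊥ := le_bot_iff.mp (fun x hx => Subgroup.mem_bot.mpr (hcon x hx))
    have : H.index = 0 := by
      rw [hbot, Subgroup.index_bot, Nat.card_eq_zero_of_infinite]
    exact hH.index_ne_zero this
  -- the entry where h differs from 1, and a modulus p^k not dividing the difference
  set A0 : Matrix (Fin n) (Fin n) ℤ := ((h : Matrix.SpecialLinearGroup (Fin n) ℤ) :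
    Matrix (Fin n) (Fin n) ℤ) with hA0
  have hA0ne : A0 ≠ 1 := by
    intro hEq
    apply hh1
    apply Subtype.ext
    apply Subtype.ext
    exact hEq
  obtain ⟨a, b, hab⟩ : ∃ a b, A0 a b ≠ (1 : Matrix (Fin n) (Fin n) ℤ) a b := by
    by_contra hc
    push_neg at hc
    exact hA0ne (by ext a b; exact hc a b)
  set d : ℤ := A0 a b - (1 : Matrix (Fin n) (Fin n) ℤ) a b with hd
  have hdne : d ≠ 0 := sub_ne_zero.mpr hab
  set k : ℕ := d.natAbs + 1 with hkdef
  have hk1 : 1 ≤ k := Nat.le_add_left 1 _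
  have hndvd : ¬ ((p : ℤ)) ^ k ∣ d := by
    intro hdvd
    have h1 : (p ^ k : ℕ) ∣ d.natAbs := by
      have := Int.natAbs_dvd_natAbs.mpr hdvd
      simpa [Int.natAbs_pow] using this
    have h2 : p ^ k ≤ d.natAbs := Nat.le_of_dvd (Int.natAbs_pos.mpr hdne) h1
    have h3 : d.natAbs < p ^ d.natAbs := Nat.lt_pow_self (n := d.natAbs) hp.one_lt
    have h4 : p ^ d.natAbs ≤ p ^ k := Nat.pow_le_pow_right hp.pos (by omega)
    omega
  -- reduction mod p^k
  set q : ℕ := p ^ k with hq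
  set f : ↥(Gamma n p) →* Matrix.SpecialLinearGroup (Fin n) (ZMod q) :=
    (Matrix.SpecialLinearGroup.map (n := Fin n) (Int.castRingHom (ZMod q))).comp
      (Gamma n p).subtype with hf
  set ψ : ↥H →* Matrix.SpecialLinearGroup (Fin n) (ZMod q) := f.comp H.subtype with hψ
  -- key: every value of ψ has p-power order
  have KQ : ∀ x : ↥H, ψ x ^ (p ^ (k - 1)) = 1 := by
    intro x
    have hg : ((x : ↥(Gamma n p)) : Matrix.SpecialLinearGroup (Fin n) ℤ) ∈ Gamma n p :=
      (x : ↥(Gamma n p)).2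
    set A : Matrix (Fin n) (Fin n) ℤ :=
      (((x : ↥(Gamma n p)) : Matrix.SpecialLinearGroup (Fin n) ℤ) :
        Matrix (Fin n) (Fin n) ℤ) with hA
    have hdvd1 : ((p : ℕ) : Matrix (Fin n) (Fin n) ℤ) ∣ (A - 1) := aux_gamma_dvd _ hg
    have hdvd2 := aux_pow_dvd_pow_sub_one (R := Matrix (Fin n) (Fin n) ℤ) p (k - 1) A hdvd1
    rw [Nat.sub_add_cancel hk1] at hdvd2
    have hmdvd : ((((q : ℕ) : ℤ)) : Matrix (Fin n) (Fin n) ℤ) ∣ (A ^ p ^ (k - 1) - 1) := by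
      have hcast : ((((q : ℕ) : ℤ)) : Matrix (Fin n) (Fin n) ℤ)
          = ((p : ℕ) : Matrix (Fin n) (Fin n) ℤ) ^ k := by
        rw [hq]; push_cast; rfl
      rw [hcast]
      exact hdvd2
    have hentry : ∀ i j, ((q : ℕ) : ℤ) ∣ (A ^ p ^ (k - 1) - 1) i j :=
      aux_entry_dvd_of_matrix_dvd _ _ hmdvd
    have hmap : (Int.castRingHom (ZMod q)).mapMatrix (A ^ p ^ (k - 1)) = 1 :=
      aux_map_eq_one _ hentry
    apply Subtype.ext
    rw [Matrix.SpecialLinearGroup.coe_pow]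
    have hψx : ((ψ x : Matrix.SpecialLinearGroup (Fin n) (ZMod q)) :
        Matrix (Fin n) (Fin n) (ZMod q)) = (Int.castRingHom (ZMod q)).mapMatrix A := rfl
    rw [hψx, ← map_pow, hmap]
    rfl
  -- ψ of the chosen element is not 1
  have hψh : ψ ⟨h, hhH⟩ ≠ 1 := by
    intro hEq
    have h1 : (Int.castRingHom (ZMod q)).mapMatrix A0 = 1 := congrArg Subtype.val hEq
    have h2 := congrFun (congrFun h1 a) b
    simp only [RingHom.mapMatrix_apply, Matrix.map_apply, Int.coe_castRingHom] at h2
    have h3 : ((d : ℤ) : ZMod q) = 0 := by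
      rw [hd]
      push_cast
      rw [h2]
      rcases eq_or_ne a b with rfl | hab'
      · simp
      · simp [Matrix.one_apply_ne hab']
    have h4 : ((q : ℕ) : ℤ) ∣ d := (ZMod.intCast_zmod_eq_zero_iff_dvd _ q).mp h3
    apply hndvd
    rw [hq] at h4
    push_cast at h4
    exact h4
  -- the image of ψ is a nontrivial finite p-group
  haveI : NeZero q := ⟨pow_ne_zero _ hp.ne_zero⟩
  haveI : Finite ↥ψ.range := Subtype.finite
  have hQp : IsPGroup p ↥ψ.range := by
    intro x
    obtain ⟨y, hy⟩ := x.2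
    refine ⟨k - 1, ?_⟩
    apply Subtype.ext
    rw [SubmonoidClass.coe_pow]
    show (x : Matrix.SpecialLinearGroup (Fin n) (ZMod q)) ^ p ^ (k - 1) = 1
    rw [← hy]
    exact KQ y
  haveI hQnt : Nontrivial ↥ψ.range := by
    refine ⟨⟨ψ ⟨h, hhH⟩, MonoidHom.mem_range.mpr ⟨⟨h, hhH⟩, rfl⟩⟩, 1, ?_⟩
    intro hEq
    exact hψh (congrArg Subtype.val hEq)
  obtain ⟨φQ, hφQ⟩ := pgroup_surj hp (Nat.card ↥ψ.range) ↥ψ.range _ inferInstance rfl hQp hQnt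
  exact ⟨φQ.comp ψ.rangeRestrict, hφQ.comp ψ.rangeRestrict_surjective⟩
end

section
/- Let m ≥ 1, n ≥ 2, and let d = gcd(a_2, ..., a_{n-1}) for nonzero integers a_2,...,a_{n-1} (n ≥ 4), and let a_1, a_n be nonzero integers with gcd(a_1, ..., a_n) = 1. Define x = ∏_{p ∈ A} p where A = {p prime : p ∣ d, p ∤ a_1, p ∤ a_n} (and x = 1 if A = ∅). Then gcd(a_1 + x·a_n, a_2, ..., a_{n-1}) = 1. -/
/-- Explicit construction in the proof that ℤ has stable range 2: with
`d = gcd(a 2, ..., a (n-1))` and `x` the product of the primes dividing `d` but dividing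
neither `a 1` nor `a n` (`x = 1` if there are none), we have
`gcd(a 1 + x·a n, a 2, ..., a (n-1)) = 1`. -/
theorem explicit_stable_range (m n : ℕ) (hm : 1 ≤ m) (hn : 4 ≤ n)
    (a : ℕ → ℤ) (ha : ∀ i ∈ Finset.Icc 1 n, a i ≠ 0)
    (hgcd : Finset.gcd (Finset.Icc 1 n) a = 1) :
    Finset.gcd (Finset.Icc 1 (n - 1))
      (fun i => if i = 1 then
          a 1 +
            (∏ p ∈ (Finset.gcd (Finset.Icc 2 (n - 1)) a).natAbs.divisors.filter
              (fun p : ℕ => p.Prime ∧ ¬ ((p : ℤ) ∣ a 1) ∧ ¬ ((p : ℤ) ∣ a n)), (p : ℤ)) * a n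
        else a i) = 1 := by
  set d : ℤ := Finset.gcd (Finset.Icc 2 (n - 1)) a with hd
  set x : ℤ := ∏ p ∈ d.natAbs.divisors.filter
      (fun p : ℕ => p.Prime ∧ ¬ ((p : ℤ) ∣ a 1) ∧ ¬ ((p : ℤ) ∣ a n)), (p : ℤ) with hx
  set u : ℤ := a 1 + x * a n with hu
  have hins : Finset.Icc 1 (n - 1) = insert 1 (Finset.Icc 2 (n - 1)) := by
    ext i; simp only [Finset.mem_Icc, Finset.mem_insert]; omega
  have hd2 : d ∣ a 2 := Finset.gcd_dvd (by simp [Finset.mem_Icc]; omega)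
  have hdne : d ≠ 0 := fun h => ha 2 (by simp [Finset.mem_Icc]; omega)
    (zero_dvd_iff.mp (h ▸ hd2))
  rw [hins, Finset.gcd_insert, if_pos rfl]
  have hrest : (Finset.gcd (Finset.Icc 2 (n - 1))
      (fun i => if i = 1 then u else a i)) = d := by
    apply Finset.gcd_congr rfl
    intro i hi
    simp only [Finset.mem_Icc] at hi
    rw [if_neg (by omega)]
  rw [hrest]
  have key : Int.gcd u d = 1 := by
    by_contra hg
    set p := (Int.gcd u d).minFac with hpdef
    have hp : p.Prime := Nat.minFac_prime hg
    have hpint : Prime (p : ℤ) := Nat.prime_iff_prime_int.mp hp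
    have hpu : (p : ℤ) ∣ u :=
      dvd_trans (Int.natCast_dvd_natCast.mpr (Nat.minFac_dvd _)) (Int.gcd_dvd_left u d)
    have hpd : (p : ℤ) ∣ d :=
      dvd_trans (Int.natCast_dvd_natCast.mpr (Nat.minFac_dvd _)) (Int.gcd_dvd_right u d)
    have hpa : ∀ i ∈ Finset.Icc 2 (n - 1), (p : ℤ) ∣ a i := fun i hi =>
      hpd.trans (Finset.gcd_dvd hi)
    -- helper: p ∣ a 1 leads to contradiction in the end; first derive p ∣ a 1
    have h1 : (p : ℤ) ∣ a 1 := by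
      by_contra h1
      have hxdvd : (p : ℤ) ∣ x * a n := by
        by_cases hn' : (p : ℤ) ∣ a n
        · exact Dvd.dvd.mul_left hn' x
        · have hmem : p ∈ d.natAbs.divisors.filter
              (fun p : ℕ => p.Prime ∧ ¬ ((p : ℤ) ∣ a 1) ∧ ¬ ((p : ℤ) ∣ a n)) := by
            rw [Finset.mem_filter, Nat.mem_divisors]
            exact ⟨⟨Int.natCast_dvd_natCast.mp (by rwa [Int.dvd_natAbs]),
              Int.natAbs_ne_zero.mpr hdne⟩, hp, h1, hn'⟩
          exact Dvd.dvd.mul_right (Finset.dvd_prod_of_mem (fun q : ℕ => (q : ℤ)) hmem) (a n)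
      exact h1 (by have := dvd_sub hpu hxdvd; simpa [hu] using this)
    -- now p ∣ a 1 and p ∣ u, so p ∣ x * a n
    have hxan : (p : ℤ) ∣ x * a n := (dvd_add_right h1).mp hpu
    rcases hpint.dvd_mul.mp hxan with hx1 | han
    · obtain ⟨q, hq, hpq⟩ := (Prime.dvd_finset_prod_iff hpint _).mp hx1
      rw [Finset.mem_filter] at hq
      have : p = q := (Nat.prime_dvd_prime_iff_eq hp hq.2.1).mp
        (Int.natCast_dvd_natCast.mp hpq)
      exact hq.2.2.1 (this ▸ h1)
    · have hdvd1 : (p : ℤ) ∣ Finset.gcd (Finset.Icc 1 n) a := by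
        apply Finset.dvd_gcd
        intro i hi
        simp only [Finset.mem_Icc] at hi
        rcases eq_or_ne i 1 with rfl | hi1
        · exact h1
        rcases eq_or_ne i n with rfl | hin
        · exact han
        · exact hpa i (by simp [Finset.mem_Icc]; omega)
      rw [hgcd] at hdvd1
      have : p ∣ 1 := by exact_mod_cast hdvd1
      exact hp.one_lt.ne' (Nat.dvd_one.mp this)
  calc gcd u d = ↑(Int.gcd u d) := (Int.coe_gcd u d).symm
    _ = 1 := by rw [key]; rfl
end
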